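/- arXiv:2409.17762 — 4 statements merged into one kernel-verified Lean document; each statement's English description precedes it below -/
import Mathlib

section
/- (Bohr's inequality.) If f is holomorphic on the open unit disc 𝔻 with |f(z)| ≤ 1 for every z ∈ 𝔻, and f(z) = Σ_{n=0}^∞ a_n z^n is its Taylor expansion at 0, then Σ_{n=0}^∞ |a_n| r^n ≤ 1 for every real r with 0 ≤ r ≤ 1/3. -/
open Metric Complex FormalMultilinearSeries

-- Möbius inequality
lemma mobius_norm_le {b w : ℂ} (hb : ‖b‖ < 1) (hw : ‖w‖ ≤ 1) :
    ‖w - b‖ ≤ ‖1 - (starRingEnd ℂ) b * w‖ := by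
  have h1 : Complex.normSq (1 - (starRingEnd ℂ) b * w) - Complex.normSq (w - b)
      = (1 - Complex.normSq b) * (1 - Complex.normSq w) := by
    simp [Complex.normSq_apply, Complex.sub_re, Complex.sub_im, Complex.mul_re, Complex.mul_im]
    ring
  have hb2 : Complex.normSq b ≤ 1 := by
    rw [Complex.normSq_eq_norm_sq]; nlinarith [norm_nonneg b]
  have hw2 : Complex.normSq w ≤ 1 := by
    rw [Complex.normSq_eq_norm_sq]; nlinarith [norm_nonneg w]
  have h2 : Complex.normSq (w - b) ≤ Complex.normSq (1 - (starRingEnd ℂ) b * w) := by nlinarith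
  have := Real.sqrt_le_sqrt h2
  simpa [Complex.norm_def] using this

-- Schwarz–Pick at center
lemma schwarz_pick_center (G : ℂ → ℂ) (hd : DifferentiableOn ℂ G (ball 0 1))
    (hbd : ∀ w ∈ ball (0:ℂ) 1, ‖G w‖ ≤ 1) : ‖deriv G 0‖ ≤ 1 - ‖G 0‖ ^ 2 := by
  set b := G 0 with hbdef
  have h0 : (0:ℂ) ∈ ball (0:ℂ) 1 := mem_ball_self one_pos
  have hb1 : ‖b‖ ≤ 1 := hbd 0 h0
  rcases eq_or_lt_of_le hb1 with heq | hlt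
  · -- max modulus: G constant
    have hmax : IsMaxOn (norm ∘ G) (ball (0:ℂ) 1) 0 := by
      intro w hw; simpa [← hbdef, heq] using hbd w hw
    have hEq := Complex.eqOn_of_isPreconnected_of_isMaxOn_norm
      (convex_ball (0:ℂ) 1).isPreconnected isOpen_ball hd h0 hmax
    have hev : G =ᶠ[nhds (0:ℂ)] fun _ => b := by
      filter_upwards [isOpen_ball.mem_nhds h0] with z hz using hEq hz
    rw [hev.deriv_eq, deriv_const, norm_zero, heq]
    norm_num
  · -- Möbius composition
    have hden : ∀ w : ℂ, ‖w‖ ≤ 1 → 1 - (starRingEnd ℂ) b * w ≠ 0 := by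
      intro w hw h
      have : ‖(starRingEnd ℂ) b * w‖ < 1 := by
        rw [norm_mul]
        calc ‖(starRingEnd ℂ) b‖ * ‖w‖ ≤ ‖b‖ * 1 := by
              apply mul_le_mul _ hw (norm_nonneg _) (norm_nonneg _)
              simp
          _ < 1 := by simpa using hlt
      rw [sub_eq_zero] at h
      rw [← h] at this; simp at this
    set ψ : ℂ → ℂ := fun z => (G z - b) / (1 - (starRingEnd ℂ) b * G z) with hψ
    have hψd : DifferentiableOn ℂ ψ (ball 0 1) := by
      apply DifferentiableOn.div (hd.sub_const b)
      · exact (differentiableOn_const 1).sub ((hd.const_mul _))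
      · intro z hz; exact hden _ (hbd z hz)
    have hψ0 : ψ 0 = 0 := by simp [hψ, ← hbdef]
    have hψb : ∀ z ∈ ball (0:ℂ) 1, ‖ψ z‖ ≤ 1 := by
      intro z hz
      rw [hψ]
      simp only [norm_div]
      rw [div_le_one_iff]
      left
      constructor
      · rcases lt_or_eq_of_le (norm_nonneg (1 - (starRingEnd ℂ) b * G z)) with h | h
        · exact h
        · exact absurd (norm_eq_zero.mp h.symm) (hden _ (hbd z hz))
      · exact mobius_norm_le hlt (hbd z hz)
    -- Schwarz for each ε
    have hψderiv : ∀ ε : ℝ, 0 < ε → ‖deriv ψ 0‖ ≤ 1 + ε := by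
      intro ε hε
      have hmaps : Set.MapsTo ψ (ball (0:ℂ) 1) (ball (ψ 0) (1 + ε)) := by
        intro z hz
        rw [hψ0, mem_ball, dist_zero_right]
        exact lt_of_le_of_lt (hψb z hz) (by linarith)
      have := Complex.norm_deriv_le_div_of_mapsTo_ball hψd (hmaps.mono_right ball_subset_closedBall) one_pos
      simpa using this
    have hψ1 : ‖deriv ψ 0‖ ≤ 1 := le_of_forall_pos_le_add fun ε hε => hψderiv ε hε
    -- compute deriv ψ 0
    have hG : HasDerivAt G (deriv G 0) 0 :=
      (hd.differentiableAt (isOpen_ball.mem_nhds h0)).hasDerivAt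
    have hnum : HasDerivAt (fun z => G z - b) (deriv G 0) 0 := hG.sub_const b
    have hdenD : HasDerivAt (fun z => 1 - (starRingEnd ℂ) b * G z)
        (-((starRingEnd ℂ) b * deriv G 0)) 0 := by
      simpa using (hG.const_mul ((starRingEnd ℂ) b)).const_sub 1
    have hd0 : (1 - (starRingEnd ℂ) b * G 0) ≠ 0 := hden _ hb1
    have hψder : HasDerivAt ψ ((deriv G 0 * (1 - (starRingEnd ℂ) b * G 0) -
        (G 0 - b) * -((starRingEnd ℂ) b * deriv G 0)) / (1 - (starRingEnd ℂ) b * G 0) ^ 2) 0 :=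
      hnum.div hdenD hd0
    have hsimp : (deriv G 0 * (1 - (starRingEnd ℂ) b * G 0) -
        (G 0 - b) * -((starRingEnd ℂ) b * deriv G 0)) / (1 - (starRingEnd ℂ) b * G 0) ^ 2
        = deriv G 0 / (1 - (starRingEnd ℂ) b * b) := by
      rw [← hbdef] at hd0 ⊢
      rw [sub_self, zero_mul, sub_zero, pow_two, mul_div_mul_right _ _ hd0]
    rw [hsimp] at hψder
    have hψder' : deriv ψ 0 = deriv G 0 / (1 - (starRingEnd ℂ) b * b) := hψder.deriv
    rw [hψder', norm_div] at hψ1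
    have hkey : ‖(1:ℂ) - (starRingEnd ℂ) b * b‖ = 1 - ‖b‖ ^ 2 := by
      have : (starRingEnd ℂ) b * b = ((‖b‖ ^ 2 : ℝ) : ℂ) := by
        rw [mul_comm, Complex.mul_conj]
        norm_cast
        rw [Complex.normSq_eq_norm_sq]
      rw [this]
      rw [show (1:ℂ) - ((‖b‖ ^ 2 : ℝ) : ℂ) = (((1 - ‖b‖ ^ 2 : ℝ)) : ℂ) by push_cast; ring]
      rw [Complex.norm_real, Real.norm_of_nonneg (by nlinarith [norm_nonneg b, hlt])]
    rw [hkey] at hψ1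
    have hpos : (0:ℝ) < 1 - ‖b‖ ^ 2 := by nlinarith [norm_nonneg b]
    calc ‖deriv G 0‖ = ‖deriv G 0‖ / (1 - ‖b‖ ^ 2) * (1 - ‖b‖ ^ 2) :=
          (div_mul_cancel₀ _ hpos.ne').symm
      _ ≤ 1 * (1 - ‖b‖ ^ 2) := by
          apply mul_le_mul_of_nonneg_right _ hpos.le
          exact hψ1
      _ = 1 - ‖b‖ ^ 2 := one_mul _


lemma bohr_rep (f : ℂ → ℂ) (a : ℕ → ℂ)
    (ha : ∀ z ∈ ball (0 : ℂ) 1, HasSum (fun n : ℕ => a n * z ^ n) (f z)) :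
    HasFPowerSeriesOnBall f (ofScalars ℂ a) 0 1 := by
  have key : ∀ ρ : NNReal, (ρ : ℝ) < 1 → (ρ : ENNReal) ≤ (ofScalars ℂ a).radius := by
    intro ρ hρ
    have hz : ((ρ : ℝ) : ℂ) ∈ ball (0:ℂ) 1 := by
      simp only [mem_ball, dist_zero_right, Complex.norm_real]
      rw [Real.norm_of_nonneg ρ.coe_nonneg]
      exact hρ
    have ht := ((ha _ hz).summable.tendsto_atTop_zero).norm
    have hnorm : ∀ m : ℕ, ‖ofScalars ℂ a m‖ = ‖a m‖ := fun m => ofScalars_norm ℂ a m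
    have ht' : Filter.Tendsto (fun n => ‖ofScalars ℂ a n‖ * (ρ:ℝ)^n)
        Filter.atTop (nhds 0) := by
      simp only [hnorm]
      simpa [norm_mul, Complex.norm_real, norm_pow, _root_.abs_of_nonneg ρ.coe_nonneg] using ht
    exact (ofScalars ℂ a).le_radius_of_tendsto ht'
  have hrad : 1 ≤ (ofScalars ℂ a).radius :=
    ENNReal.le_of_forall_nnreal_lt fun ρ hρ => key ρ (by exact_mod_cast hρ)
  refine ⟨hrad, one_pos, ?_⟩
  intro y hy
  have hy' : y ∈ ball (0:ℂ) 1 := by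
    rw [mem_emetric_ball_zero_iff] at hy
    rw [mem_ball, dist_zero_right]
    rw [← ofReal_norm, ENNReal.ofReal_lt_one] at hy
    exact_mod_cast hy
  simp only [ofScalars_apply_eq, smul_eq_mul, zero_add]
  exact ha y hy'

lemma bohr_coeff_le_one (f : ℂ → ℂ)
    (hd : DifferentiableOn ℂ f (ball (0 : ℂ) 1))
    (hb : ∀ z ∈ ball (0 : ℂ) 1, ‖f z‖ ≤ 1)
    (a : ℕ → ℂ)
    (ha : ∀ z ∈ ball (0 : ℂ) 1, HasSum (fun n : ℕ => a n * z ^ n) (f z))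
    (n : ℕ) : ‖a n‖ ≤ 1 := by
  have hrep := bohr_rep f a ha
  have key : ∀ ρ : ℝ, 0 < ρ → ρ < 1 → ‖a n‖ * ρ ^ n ≤ 1 := by
    intro ρ hρ0 hρ1
    set ρ' : NNReal := ⟨ρ, hρ0.le⟩ with hρ'
    have hρ'0 : 0 < ρ' := by exact_mod_cast hρ0
    have hsub : closedBall (0:ℂ) ρ' ⊆ ball 0 1 := closedBall_subset_ball (by exact_mod_cast hρ1)
    have hcb := (hd.mono hsub).hasFPowerSeriesOnBall hρ'0
    have heq : ofScalars ℂ a = cauchyPowerSeries f 0 ρ' :=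
      hrep.hasFPowerSeriesAt.eq_formalMultilinearSeries hcb.hasFPowerSeriesAt
    have hcoeff : a n = (cauchyPowerSeries f 0 ρ').coeff n := by
      rw [← heq]
      simp only [FormalMultilinearSeries.coeff]
      rw [show (1 : Fin n → ℂ) = fun _ => (1:ℂ) from rfl, ofScalars_apply_eq]
      simp
    have h1 : ‖(cauchyPowerSeries f 0 ρ').coeff n‖ ≤ ‖cauchyPowerSeries f 0 ρ' n‖ :=
      le_of_eq (FormalMultilinearSeries.norm_apply_eq_norm_coef).symm
    have h2 := norm_cauchyPowerSeries_le f 0 ρ' n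
    -- continuity of the circle restriction
    have hc : Continuous fun θ : ℝ => f (circleMap 0 ρ' θ) := by
      apply hd.continuousOn.comp_continuous (continuous_circleMap 0 ρ')
      intro θ
      rw [mem_ball, dist_zero_right, norm_circleMap_zero]
      rw [show |(ρ' : ℝ)| = ρ from _root_.abs_of_nonneg hρ0.le]
      exact hρ1
    have hint : (∫ θ : ℝ in (0)..2 * Real.pi, ‖f (circleMap 0 ρ' θ)‖) ≤ 2 * Real.pi := by
      have h2pi : (0:ℝ) ≤ 2 * Real.pi := Real.two_pi_pos.le
      calc (∫ θ : ℝ in (0)..2 * Real.pi, ‖f (circleMap 0 ρ' θ)‖)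
          ≤ ∫ _θ : ℝ in (0)..2 * Real.pi, (1:ℝ) := by
            apply intervalIntegral.integral_mono_on h2pi (hc.norm.intervalIntegrable _ _)
              intervalIntegrable_const
            intro θ _
            apply hb
            rw [mem_ball, dist_zero_right, norm_circleMap_zero]
            rw [show |(ρ' : ℝ)| = ρ from _root_.abs_of_nonneg hρ0.le]
            exact hρ1
        _ = 2 * Real.pi := by simp
    have habs : |(ρ' : ℝ)| = ρ := _root_.abs_of_nonneg hρ0.le
    have h3 : ‖a n‖ ≤ ρ⁻¹ ^ n := by
      rw [hcoeff]
      refine h1.trans (h2.trans ?_)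
      rw [habs]
      have : (2 * Real.pi)⁻¹ * (∫ θ : ℝ in (0)..2 * Real.pi, ‖f (circleMap 0 ρ' θ)‖) ≤ 1 := by
        rw [inv_mul_le_iff₀ Real.two_pi_pos, mul_one]
        exact hint
      calc (2 * Real.pi)⁻¹ * (∫ θ : ℝ in (0)..2 * Real.pi, ‖f (circleMap 0 ρ' θ)‖) * ρ⁻¹ ^ n
          ≤ 1 * ρ⁻¹ ^ n := by
            apply mul_le_mul_of_nonneg_right this
            positivity
        _ = ρ⁻¹ ^ n := one_mul _
    calc ‖a n‖ * ρ ^ n ≤ ρ⁻¹ ^ n * ρ ^ n := by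
          apply mul_le_mul_of_nonneg_right h3 (by positivity)
      _ = 1 := by
          rw [← mul_pow, inv_mul_cancel₀ hρ0.ne', one_pow]
  have htends : Filter.Tendsto (fun ρ : ℝ => ‖a n‖ * ρ ^ n) (nhdsWithin 1 (Set.Iio 1))
      (nhds (‖a n‖ * 1 ^ n)) :=
    ((continuous_const.mul (continuous_pow n)).tendsto 1).mono_left nhdsWithin_le_nhds
  have hev : ∀ᶠ ρ in nhdsWithin (1:ℝ) (Set.Iio 1), ‖a n‖ * ρ ^ n ≤ 1 := by
    filter_upwards [Ioo_mem_nhdsLT_of_mem (by norm_num : (1:ℝ) ∈ Set.Ioc (0:ℝ) 1)] with ρ hρ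
    exact key ρ hρ.1 hρ.2
  have := le_of_tendsto htends hev
  simpa using this

lemma bohr_key (f : ℂ → ℂ)
    (hd : DifferentiableOn ℂ f (ball (0 : ℂ) 1))
    (hb : ∀ z ∈ ball (0 : ℂ) 1, ‖f z‖ ≤ 1)
    (a : ℕ → ℂ)
    (ha : ∀ z ∈ ball (0 : ℂ) 1, HasSum (fun n : ℕ => a n * z ^ n) (f z))
    (N : ℕ) (hN : 1 ≤ N) : ‖a N‖ ≤ 1 - ‖a 0‖ ^ 2 := by
  have hcoe := bohr_coeff_le_one f hd hb a ha
  have hN0 : N ≠ 0 := by omega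
  set ω : ℂ := Complex.exp (2 * Real.pi * Complex.I / N) with hω
  have hprim : IsPrimitiveRoot ω N := Complex.isPrimitiveRoot_exp N hN0
  have hω1 : ω ^ N = 1 := hprim.pow_eq_one
  have hωnorm : ‖ω‖ = 1 := by
    rw [hω, show (2 * (Real.pi:ℂ) * Complex.I / N)
        = ((2 * Real.pi / N : ℝ) : ℂ) * Complex.I by push_cast; ring]
    rw [Complex.norm_exp_ofReal_mul_I]
  set q : FormalMultilinearSeries ℂ ℂ ℂ :=
    FormalMultilinearSeries.ofScalars ℂ (fun m => a (N * m)) with hq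
  have hqrad : 1 ≤ q.radius := by
    have := q.le_radius_of_bound 1 (r := 1) (fun m => by
      rw [hq, ofScalars_norm]
      simp only [NNReal.coe_one, one_pow, mul_one]
      exact hcoe (N * m))
    simpa using this
  set G : ℂ → ℂ := fun w => ∑' m, a (N * m) * w ^ m with hG
  have hGsum : ∀ w ∈ ball (0:ℂ) 1, HasSum (fun m => a (N * m) * w ^ m) (G w) := by
    intro w hw
    rw [mem_ball, dist_zero_right] at hw
    apply Summable.hasSum
    apply Summable.of_norm
    apply Summable.of_nonneg_of_le (fun m => norm_nonneg _) (fun m => ?_)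
      (summable_geometric_of_lt_one (norm_nonneg w) hw)
    rw [norm_mul, norm_pow]
    calc ‖a (N * m)‖ * ‖w‖ ^ m ≤ 1 * ‖w‖ ^ m :=
          mul_le_mul_of_nonneg_right (hcoe _) (by positivity)
      _ = ‖w‖ ^ m := one_mul _
  have hGrep : HasFPowerSeriesOnBall G q 0 1 := by
    refine ⟨hqrad, one_pos, ?_⟩
    intro y hy
    have hy' : y ∈ ball (0:ℂ) 1 := by
      rw [mem_emetric_ball_zero_iff] at hy
      rw [mem_ball, dist_zero_right]
      rw [← ofReal_norm, ENNReal.ofReal_lt_one] at hy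
      exact_mod_cast hy
    simp only [hq, ofScalars_apply_eq, smul_eq_mul, zero_add]
    exact hGsum y hy'
  have hGavg : ∀ w ∈ ball (0:ℂ) 1, ‖G w‖ ≤ 1 := by
    intro w hw'
    have hw : ‖w‖ < 1 := by rwa [mem_ball, dist_zero_right] at hw'
    obtain ⟨z, hz⟩ := IsAlgClosed.exists_pow_nat_eq w (by omega : 0 < N)
    have hzn : ‖z‖ < 1 := by
      by_contra h
      push_neg at h
      have h1 : (1:ℝ) ≤ ‖z‖ ^ N := one_le_pow₀ h
      rw [← hz, norm_pow] at hw
      linarith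
    have hmem : ∀ k : ℕ, ω ^ k * z ∈ ball (0:ℂ) 1 := by
      intro k
      rw [mem_ball, dist_zero_right, norm_mul, norm_pow, hωnorm, one_pow, one_mul]
      exact hzn
    set S : ℂ := ∑ k ∈ Finset.range N, (N:ℂ)⁻¹ * f (ω ^ k * z) with hS
    have hsum1 : HasSum (fun j : ℕ => ∑ k ∈ Finset.range N, (N:ℂ)⁻¹ * (a j * (ω ^ k * z) ^ j)) S :=
      hasSum_sum fun k _ => (ha _ (hmem k)).mul_left _
    have hfun : ∀ j : ℕ, (∑ k ∈ Finset.range N, (N:ℂ)⁻¹ * (a j * (ω ^ k * z) ^ j))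
        = if N ∣ j then a j * z ^ j else 0 := by
      intro j
      have hterm : ∀ k : ℕ, (N:ℂ)⁻¹ * (a j * (ω ^ k * z) ^ j)
          = (N:ℂ)⁻¹ * (a j * z ^ j) * (ω ^ j) ^ k := by
        intro k
        rw [mul_pow, ← pow_mul, mul_comm k j, pow_mul]
        ring
      rw [Finset.sum_congr rfl (fun k _ => hterm k), ← Finset.mul_sum]
      by_cases hdvd : N ∣ j
      · rw [if_pos hdvd, (hprim.pow_eq_one_iff_dvd j).mpr hdvd]
        simp only [one_pow, Finset.sum_const, Finset.card_range, nsmul_eq_mul, mul_one]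
        have hNne : (N:ℂ) ≠ 0 := Nat.cast_ne_zero.mpr hN0
        field_simp
      · rw [if_neg hdvd]
        have hne : ω ^ j ≠ 1 := fun h => hdvd ((hprim.pow_eq_one_iff_dvd j).mp h)
        rw [geom_sum_eq hne, ← pow_mul, mul_comm j N, pow_mul, hω1, one_pow, sub_self,
          zero_div, mul_zero]
    have hsum2 : HasSum (fun j : ℕ => if N ∣ j then a j * z ^ j else 0) S := by
      simpa only [hfun] using hsum1
    have hinj : Function.Injective (fun m : ℕ => N * m) := fun x y h => by
      have : N * x = N * y := h
      exact Nat.eq_of_mul_eq_mul_left (by omega) this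
    have hvanish : ∀ j ∉ Set.range (fun m : ℕ => N * m),
        (if N ∣ j then a j * z ^ j else 0) = 0 := by
      intro j hj
      rw [if_neg]
      intro hdvd
      obtain ⟨m, rfl⟩ := hdvd
      exact hj ⟨m, rfl⟩
    have hsum3 := (Function.Injective.hasSum_iff hinj hvanish).mpr hsum2
    have hsum4 : HasSum (fun m : ℕ => a (N * m) * (z ^ N) ^ m) S := by
      have hco : ((fun j : ℕ => if N ∣ j then a j * z ^ j else 0) ∘ fun m : ℕ => N * m)
          = fun m : ℕ => a (N * m) * (z ^ N) ^ m := by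
        funext m
        simp only [Function.comp_apply]
        rw [if_pos (dvd_mul_right N m), pow_mul]
      rwa [hco] at hsum3
    rw [← hz]
    have h5 := hGsum (z ^ N) (by rw [mem_ball, dist_zero_right, norm_pow]; rw [← hz, norm_pow] at hw; exact hw)
    have hGS : G (z ^ N) = S := h5.unique hsum4
    rw [hGS, hS]
    calc ‖∑ k ∈ Finset.range N, (N:ℂ)⁻¹ * f (ω ^ k * z)‖
        ≤ ∑ k ∈ Finset.range N, ‖(N:ℂ)⁻¹ * f (ω ^ k * z)‖ := norm_sum_le _ _
      _ ≤ ∑ _k ∈ Finset.range N, (N:ℝ)⁻¹ * 1 := by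
          apply Finset.sum_le_sum
          intro k _
          rw [norm_mul, norm_inv, Complex.norm_natCast]
          exact mul_le_mul_of_nonneg_left (hb _ (hmem k)) (by positivity)
      _ = 1 := by
          rw [Finset.sum_const, Finset.card_range, nsmul_eq_mul, mul_one]
          field_simp
  have hGd : DifferentiableOn ℂ G (ball (0:ℂ) 1) := by
    apply hGrep.differentiableOn.mono
    intro z hz
    rw [mem_emetric_ball_zero_iff, ← ofReal_norm, ENNReal.ofReal_lt_one]
    exact_mod_cast mem_ball_zero_iff.mp hz
  have hG0 : G 0 = a 0 := by
    have h0 : G 0 = ∑' m : ℕ, a (N * m) * (0:ℂ) ^ m := rfl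
    rw [h0, tsum_eq_single 0 (fun m hm => by rw [zero_pow hm, mul_zero])]
    simp
  have hderiv : deriv G 0 = a N := by
    have h1 : deriv G 0 = q.coeff 1 := hGrep.hasFPowerSeriesAt.deriv
    have h2 : q.coeff 1 = a N := by
      rw [hq]
      simp only [FormalMultilinearSeries.coeff]
      rw [show (1 : Fin 1 → ℂ) = fun _ => (1:ℂ) from rfl, ofScalars_apply_eq]
      simp
    rw [h1, h2]
  have := schwarz_pick_center G hGd hGavg
  rwa [hderiv, hG0] at this

set_option maxHeartbeats 1000000 in
/-- **Bohr's inequality.** If `f` is holomorphic on the open unit disc with `‖f z‖ ≤ 1`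
for every `z` in the disc, and `f z = Σ aₙ zⁿ` is its Taylor expansion at `0`, then
`Σ ‖aₙ‖ rⁿ ≤ 1` for every real `0 ≤ r ≤ 1/3`. -/
theorem bohr_inequality (f : ℂ → ℂ)
    (hd : DifferentiableOn ℂ f (ball (0 : ℂ) 1))
    (hb : ∀ z ∈ ball (0 : ℂ) 1, ‖f z‖ ≤ 1)
    (a : ℕ → ℂ)
    (ha : ∀ z ∈ ball (0 : ℂ) 1, HasSum (fun n : ℕ => a n * z ^ n) (f z))
    (r : ℝ) (hr0 : 0 ≤ r) (hr : r ≤ 1 / 3) :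
    ∑' n : ℕ, ‖a n‖ * r ^ n ≤ 1 := by
  have hcoe := bohr_coeff_le_one f hd hb a ha
  have hkey : ∀ n : ℕ, 1 ≤ n → ‖a n‖ ≤ 1 - ‖a 0‖ ^ 2 :=
    fun n hn => bohr_key f hd hb a ha n hn
  have hr1 : r < 1 := lt_of_le_of_lt hr (by norm_num)
  set x := ‖a 0‖ with hx
  have hx0 : 0 ≤ x := norm_nonneg _
  have hx1 : x ≤ 1 := hcoe 0
  have hsum : Summable (fun n : ℕ => ‖a n‖ * r ^ n) := by
    apply Summable.of_nonneg_of_le (fun n => mul_nonneg (norm_nonneg _) (pow_nonneg hr0 n))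
      (fun n => ?_) (summable_geometric_of_lt_one hr0 hr1)
    calc ‖a n‖ * r ^ n ≤ 1 * r ^ n :=
          mul_le_mul_of_nonneg_right (hcoe n) (pow_nonneg hr0 n)
      _ = r ^ n := one_mul _
  rw [hsum.tsum_eq_zero_add]
  have hsum2 : Summable (fun n : ℕ => ‖a (n + 1)‖ * r ^ (n + 1)) :=
    (summable_nat_add_iff 1).mpr hsum
  have hfeq : (fun n : ℕ => (1 - x ^ 2) * r ^ (n + 1)) = fun n : ℕ => ((1 - x ^ 2) * r) * r ^ n := by
    funext n
    ring
  have hsum3 : Summable (fun n : ℕ => (1 - x ^ 2) * r ^ (n + 1)) := by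
    rw [hfeq]
    exact (summable_geometric_of_lt_one hr0 hr1).mul_left _
  have hbound : (∑' n : ℕ, ‖a (n + 1)‖ * r ^ (n + 1)) ≤ ∑' n : ℕ, (1 - x ^ 2) * r ^ (n + 1) := by
    apply Summable.tsum_le_tsum _ hsum2 hsum3
    intro n
    exact mul_le_mul_of_nonneg_right (hkey (n + 1) (by omega)) (pow_nonneg hr0 _)
  have hgeo : (∑' n : ℕ, (1 - x ^ 2) * r ^ (n + 1)) = (1 - x ^ 2) * r * (1 - r)⁻¹ := by
    rw [hfeq, tsum_mul_left, tsum_geometric_of_lt_one hr0 hr1]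
  have h1r : (0:ℝ) < 1 - r := by linarith
  have hrr : r * (1 - r)⁻¹ ≤ 2⁻¹ := by
    rw [mul_inv_le_iff₀ h1r]
    linarith
  have hx2 : (0:ℝ) ≤ 1 - x ^ 2 := by nlinarith
  calc ‖a 0‖ * r ^ 0 + ∑' n : ℕ, ‖a (n + 1)‖ * r ^ (n + 1)
      ≤ x + (1 - x ^ 2) * r * (1 - r)⁻¹ := by
        rw [pow_zero, mul_one, ← hx]
        exact add_le_add_right (hbound.trans_eq hgeo) _
    _ ≤ x + (1 - x ^ 2) * 2⁻¹ := by
        rw [mul_assoc]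
        exact add_le_add_right (mul_le_mul_of_nonneg_left hrr hx2) _
    _ ≤ 1 := by nlinarith
end

section
/- (Sharpness of the Bohr radius 1/3.) For every real r with 1/3 < r < 1 there exists a holomorphic function f on 𝔻 with |f(z)| ≤ 1 for all z ∈ 𝔻 whose Taylor coefficients a_n at 0 satisfy Σ_{n=0}^∞ |a_n| r^n > 1. -/
open Metric

/-- **Sharpness of the Bohr radius `1/3`.** For every real `r` with `1/3 < r < 1` there
exists a holomorphic function `f` on the unit disc, bounded by `1`, whose Taylor
coefficients `aₙ` at `0` satisfy `Σ ‖aₙ‖ rⁿ > 1`. -/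
theorem bohr_radius_sharp (r : ℝ) (hr1 : 1 / 3 < r) (hr2 : r < 1) :
    ∃ f : ℂ → ℂ, ∃ a : ℕ → ℂ,
      DifferentiableOn ℂ f (ball (0 : ℂ) 1) ∧
      (∀ z ∈ ball (0 : ℂ) 1, ‖f z‖ ≤ 1) ∧
      (∀ z ∈ ball (0 : ℂ) 1, HasSum (fun n : ℕ => a n * z ^ n) (f z)) ∧
      1 < ∑' n : ℕ, ‖a n‖ * r ^ n := by
  have hr0 : 0 < r := lt_trans (by norm_num) hr1
  obtain ⟨a, ha0, ha1, hkey, har⟩ :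
      ∃ a : ℝ, 0 < a ∧ a < 1 ∧ 1 < r * (1 + 2 * a) ∧ a * r < 1 := by
    refine ⟨((1 - r) / (2 * r) + 1) / 2, ?_, ?_, ?_, ?_⟩
    · have : 0 ≤ (1 - r) / (2 * r) := div_nonneg (by linarith) (by linarith)
      linarith
    · have h : (1 - r) / (2 * r) < 1 := (div_lt_one (by linarith)).mpr (by linarith)
      linarith
    · have h : (1 - r) / (2 * r) * (2 * r) = 1 - r := div_mul_cancel₀ _ (by linarith)
      nlinarith
    · have h : (1 - r) / (2 * r) < 1 := (div_lt_one (by linarith)).mpr (by linarith)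
      nlinarith
  have har0 : 0 ≤ a * r := by positivity
  set f : ℂ → ℂ := fun z => ((a : ℂ) - z) * ((1 : ℂ) - (a : ℂ) * z)⁻¹ with hf_def
  set c : ℕ → ℂ := fun n => match n with
    | 0 => (a : ℂ)
    | n + 1 => -((1 - (a : ℂ) ^ 2) * (a : ℂ) ^ n) with hc_def
  have hnorm : ∀ z : ℂ, ‖z‖ < 1 → ‖(a : ℂ) * z‖ < 1 := by
    intro z hz1
    rw [norm_mul, Complex.norm_real, Real.norm_eq_abs, abs_of_pos ha0]
    nlinarith [norm_nonneg z]
  have hne : ∀ z ∈ ball (0 : ℂ) 1, (1 : ℂ) - (a : ℂ) * z ≠ 0 := by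
    intro z hz h
    have h1 := hnorm z (mem_ball_zero_iff.mp hz)
    rw [← sub_eq_zero.mp h, norm_one] at h1
    linarith
  refine ⟨f, c, ?_, ?_, ?_, ?_⟩
  · -- differentiable
    apply DifferentiableOn.mul
    · exact ((differentiable_const _).sub differentiable_id).differentiableOn
    · exact DifferentiableOn.inv
        (((differentiable_const _).sub ((differentiable_id).const_mul _)).differentiableOn) hne
  · -- bounded by 1
    intro z hz
    have hz1 : ‖z‖ < 1 := mem_ball_zero_iff.mp hz
    have hden : 0 < ‖(1 : ℂ) - (a : ℂ) * z‖ := norm_pos_iff.mpr (hne z hz)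
    rw [hf_def]
    simp only
    rw [norm_mul, norm_inv, ← div_eq_mul_inv, div_le_one hden]
    have hz2 : z.re ^ 2 + z.im ^ 2 < 1 := by
      have h1 : ‖z‖ ^ 2 < 1 := by nlinarith [norm_nonneg z]
      have h2 : ‖z‖ ^ 2 = z.re ^ 2 + z.im ^ 2 := by
        rw [Complex.sq_norm, Complex.normSq_apply]; ring
      linarith [h2 ▸ h1]
    have hprod : (0:ℝ) ≤ (1 - a ^ 2) * (1 - z.re ^ 2 - z.im ^ 2) :=
      mul_nonneg (by nlinarith) (by linarith)
    have hsq : ‖(a : ℂ) - z‖ ^ 2 ≤ ‖(1 : ℂ) - (a : ℂ) * z‖ ^ 2 := by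
      rw [Complex.sq_norm, Complex.sq_norm]
      simp [Complex.normSq_apply, Complex.sub_re, Complex.sub_im, Complex.mul_re,
        Complex.mul_im, Complex.ofReal_re, Complex.ofReal_im]
      nlinarith [hprod]
    nlinarith [norm_nonneg ((a : ℂ) - z), norm_nonneg ((1 : ℂ) - (a : ℂ) * z)]
  · -- power series
    intro z hz
    have hz1 : ‖z‖ < 1 := mem_ball_zero_iff.mp hz
    have hazn : ‖(a : ℂ) * z‖ < 1 := hnorm z hz1
    have hgeo : HasSum (fun n : ℕ => ((a : ℂ) * z) ^ n) ((1 - (a : ℂ) * z)⁻¹) :=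
      hasSum_geometric_of_norm_lt_one hazn
    have hg : HasSum (fun n : ℕ => (a : ℂ) * ((a : ℂ) * z) ^ n)
        ((a : ℂ) * (1 - (a : ℂ) * z)⁻¹) := hgeo.mul_left _
    set h : ℕ → ℂ := fun n => match n with
      | 0 => 0
      | n + 1 => z * ((a : ℂ) * z) ^ n with hh_def
    have hh : HasSum h (z * (1 - (a : ℂ) * z)⁻¹) := by
      have h1 : HasSum (fun n : ℕ => h (n + 1)) (z * (1 - (a : ℂ) * z)⁻¹) :=
        hgeo.mul_left z
      have h2 := (hasSum_nat_add_iff (f := h) 1).mp h1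
      simpa [hh_def] using h2
    have hsum := hg.sub hh
    have heq : (fun n : ℕ => c n * z ^ n)
        = fun n : ℕ => (a : ℂ) * ((a : ℂ) * z) ^ n - h n := by
      funext n
      cases n with
      | zero => simp [hc_def, hh_def]
      | succ n => simp only [hc_def, hh_def]; ring
    rw [heq]
    convert hsum using 1
    · rfl
    rw [hf_def]; ring
  · -- the sum of moduli exceeds 1
    have ha2 : (0:ℝ) ≤ 1 - a ^ 2 := by nlinarith
    have hcn : ∀ n : ℕ, ‖c (n + 1)‖ = (1 - a ^ 2) * a ^ n := by
      intro n
      simp only [hc_def, norm_neg, norm_mul, norm_pow]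
      rw [show (1 : ℂ) - (a : ℂ) ^ 2 = ((1 - a ^ 2 : ℝ) : ℂ) by push_cast; ring,
        Complex.norm_real, Complex.norm_real, Real.norm_eq_abs, Real.norm_eq_abs,
        abs_of_nonneg ha2, abs_of_pos ha0]
    have hc0 : ‖c 0‖ = a := by
      simp [hc_def, Complex.norm_real, Real.norm_eq_abs, abs_of_pos ha0]
    have hshift : HasSum (fun n : ℕ => ‖c (n + 1)‖ * r ^ (n + 1))
        ((1 - a ^ 2) * r * (1 - a * r)⁻¹) := by
      have hg : HasSum (fun n : ℕ => ((1 - a ^ 2) * r) * (a * r) ^ n)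
          (((1 - a ^ 2) * r) * (1 - a * r)⁻¹) :=
        (hasSum_geometric_of_lt_one har0 har).mul_left _
      convert hg using 2 with n
      rw [hcn n]; ring
    have hsum : HasSum (fun n : ℕ => ‖c n‖ * r ^ n)
        ((1 - a ^ 2) * r * (1 - a * r)⁻¹ + a) := by
      have h2 := (hasSum_nat_add_iff (f := fun n : ℕ => ‖c n‖ * r ^ n) 1).mp hshift
      simp only [Finset.sum_range_one, pow_zero, mul_one, hc0] at h2
      exact h2
    rw [hsum.tsum_eq]
    have h1ar : 0 < 1 - a * r := by linarith
    have hlt : 1 - a < (1 - a ^ 2) * r * (1 - a * r)⁻¹ := by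
      rw [← div_eq_mul_inv, lt_div_iff₀ h1ar]
      nlinarith
    linarith
end

section
/- If f ∈ 𝓑 with Taylor coefficients a_n, then for every real r with 0 ≤ r ≤ 1/3 one has Σ_{n=0}^∞ |a_n| r^n + (16/9)·S_r(f)/(π − S_r(f)) ≤ 1. -/
open Metric Complex Filter Set NNReal

noncomputable section

set_option maxHeartbeats 1000000

namespace BohrKP

/-- Coefficients of a power series representation on the unit ball are bounded at each radius
`ρ < 1`. -/
lemma bddCoeff {b : ℕ → ℂ} {g : ℂ → ℂ}
    (hrep : ∀ z ∈ Metric.ball (0:ℂ) 1, HasSum (fun n => b n * z ^ n) (g z))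
    {ρ : ℝ} (h0 : 0 ≤ ρ) (h1 : ρ < 1) :
    ∃ C : ℝ, 0 ≤ C ∧ ∀ j : ℕ, ‖b j‖ * ρ ^ j ≤ C := by
  set σ : ℝ := (ρ + 1) / 2 with hσ
  have hσ0 : 0 ≤ σ := by positivity
  have hσ1 : σ < 1 := by rw [hσ]; linarith
  have hρσ : ρ ≤ σ := by rw [hσ]; linarith
  have hmem : ((σ : ℂ)) ∈ Metric.ball (0:ℂ) 1 := by
    rw [mem_ball_zero_iff, Complex.norm_real, Real.norm_of_nonneg hσ0]; exact hσ1
  have hsum := (hrep _ hmem).summable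
  have htend : Tendsto (fun j => ‖b j * (σ:ℂ) ^ j‖) atTop (nhds 0) := by
    simpa using (hsum.tendsto_atTop_zero.norm)
  obtain ⟨C, hC⟩ := htend.bddAbove_range
  refine ⟨C, le_trans (norm_nonneg _) (hC ⟨0, rfl⟩), fun j => ?_⟩
  have h2 : ‖b j * (σ:ℂ) ^ j‖ ≤ C := hC ⟨j, rfl⟩
  have h3 : ‖b j * (σ:ℂ) ^ j‖ = ‖b j‖ * σ ^ j := by
    rw [norm_mul, norm_pow, Complex.norm_real, Real.norm_of_nonneg hσ0]
  calc ‖b j‖ * ρ ^ j ≤ ‖b j‖ * σ ^ j :=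
        mul_le_mul_of_nonneg_left (pow_le_pow_left₀ h0 hρσ j) (norm_nonneg _)
    _ ≤ C := by rw [← h3]; exact h2

lemma radius_ge_one {b : ℕ → ℂ} {g : ℂ → ℂ}
    (hrep : ∀ z ∈ Metric.ball (0:ℂ) 1, HasSum (fun n => b n * z ^ n) (g z)) :
    1 ≤ (FormalMultilinearSeries.ofScalars ℂ b).radius := by
  apply ENNReal.le_of_forall_nnreal_lt
  intro ρ hρ
  have hρ1 : (ρ : ℝ) < 1 := by exact_mod_cast hρ
  obtain ⟨C, -, hC⟩ := bddCoeff hrep ρ.coe_nonneg hρ1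
  apply FormalMultilinearSeries.le_radius_of_bound _ C
  intro n
  rw [FormalMultilinearSeries.ofScalars_norm]
  exact hC n

lemma rep_hasFPower {b : ℕ → ℂ} {g : ℂ → ℂ}
    (hrep : ∀ z ∈ Metric.ball (0:ℂ) 1, HasSum (fun n => b n * z ^ n) (g z)) :
    HasFPowerSeriesOnBall g (FormalMultilinearSeries.ofScalars ℂ b) 0 1 := by
  refine ⟨radius_ge_one hrep, one_pos, ?_⟩
  intro y hy
  rw [mem_emetric_ball_zero_iff] at hy
  have hy' : y ∈ Metric.ball (0:ℂ) 1 := by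
    rw [← ofReal_norm, ENNReal.ofReal_lt_one] at hy; rw [mem_ball_zero_iff]; exact hy
  have := hrep y hy'
  rw [zero_add]
  convert this using 3 with n
  · rfl
  rw [FormalMultilinearSeries.ofScalars_apply_eq, smul_eq_mul]

/-- Existence of a power series representation for a function differentiable on the unit ball. -/
lemma exists_rep {g : ℂ → ℂ} (hd : DifferentiableOn ℂ g (Metric.ball (0:ℂ) 1)) :
    ∃ b : ℕ → ℂ, ∀ z ∈ Metric.ball (0:ℂ) 1, HasSum (fun n => b n * z ^ n) (g z) := by
  have key : ∀ s : ℝ≥0, 0 < s → (s:ℝ) < 1 →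
      HasFPowerSeriesOnBall g (cauchyPowerSeries g 0 s) 0 s := by
    intro s hs0 hs1
    exact (hd.mono (closedBall_subset_ball hs1)).hasFPowerSeriesOnBall hs0
  refine ⟨fun n => (cauchyPowerSeries g 0 ((1:ℝ≥0)/2)).coeff n, fun z hz => ?_⟩
  rw [mem_ball_zero_iff] at hz
  set s : ℝ≥0 := ⟨(1 + ‖z‖) / 2, by positivity⟩ with hs
  have hsc : (s : ℝ) = (1 + ‖z‖) / 2 := rfl
  have hzs : ‖z‖ < (s : ℝ) := by rw [hsc]; linarith
  have hs1 : (s : ℝ) < 1 := by rw [hsc]; linarith [norm_nonneg z]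
  have hs0 : 0 < s := by
    rw [← NNReal.coe_pos, hsc]; positivity
  have h1 := key s hs0 hs1
  have h2 := key ((1:ℝ≥0)/2) (by norm_num) (by norm_num)
  have heq : cauchyPowerSeries g 0 ((1:ℝ≥0)/2) = cauchyPowerSeries g 0 s :=
    h2.hasFPowerSeriesAt.eq_formalMultilinearSeries h1.hasFPowerSeriesAt
  have h3 := h1.hasSum (y := z) (by rw [mem_emetric_ball_zero_iff]; exact_mod_cast hzs)
  rw [zero_add] at h3
  convert h3 using 3 with n
  · rfl
  rw [FormalMultilinearSeries.apply_eq_pow_smul_coeff, heq, smul_eq_mul, mul_comm]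

/-- Sharp Cauchy-type estimate for coefficients. -/
lemma coeff_mul_pow_le {b : ℕ → ℂ} {g : ℂ → ℂ} {C : ℝ}
    (hd : DifferentiableOn ℂ g (Metric.ball (0:ℂ) 1))
    (hC : ∀ z ∈ Metric.ball (0:ℂ) 1, ‖g z‖ ≤ C)
    (hrep : ∀ z ∈ Metric.ball (0:ℂ) 1, HasSum (fun n => b n * z ^ n) (g z))
    {ρ : ℝ} (h0 : 0 < ρ) (h1 : ρ < 1) (m : ℕ) :
    ‖b m‖ * ρ ^ m ≤ C := by
  have hC0 : 0 ≤ C := le_trans (norm_nonneg _) (hC 0 (mem_ball_self one_pos))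
  set ρ' : ℝ≥0 := ⟨ρ, h0.le⟩ with hρ'
  have hρc : (ρ' : ℝ) = ρ := rfl
  have hq := rep_hasFPower hrep
  have hp : HasFPowerSeriesOnBall g (cauchyPowerSeries g 0 ρ') 0 ρ' :=
    (hd.mono (closedBall_subset_ball (by rw [hρc]; exact h1))).hasFPowerSeriesOnBall
      (by rw [← NNReal.coe_pos, hρc]; exact h0)
  have heq : FormalMultilinearSeries.ofScalars ℂ b = cauchyPowerSeries g 0 ρ' :=
    hq.hasFPowerSeriesAt.eq_formalMultilinearSeries hp.hasFPowerSeriesAt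
  have hbm : ‖b m‖ = ‖cauchyPowerSeries g 0 ρ' m‖ := by
    rw [FormalMultilinearSeries.norm_apply_eq_norm_coef, ← heq,
      FormalMultilinearSeries.coeff, FormalMultilinearSeries.ofScalars]
    simp [List.prod_ofFn]
  -- continuity of g on the circle
  have hcont : Continuous fun θ : ℝ => ‖g (circleMap 0 ρ θ)‖ := by
    refine (Continuous.norm ?_)
    refine ContinuousOn.comp_continuous hd.continuousOn (continuous_circleMap 0 ρ) ?_
    intro θ
    rw [mem_ball_zero_iff]
    have : ‖circleMap 0 ρ θ‖ = |ρ| := norm_circleMap_zero ρ θ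
    rw [this, abs_of_pos h0]; exact h1
  have hint : (∫ θ : ℝ in (0)..2 * Real.pi, ‖g (circleMap 0 ρ θ)‖) ≤ 2 * Real.pi * C := by
    have h2 : (∫ θ : ℝ in (0)..2 * Real.pi, ‖g (circleMap 0 ρ θ)‖) ≤
        ∫ _ : ℝ in (0)..2 * Real.pi, C := by
      apply intervalIntegral.integral_mono_on Real.two_pi_pos.le
        (hcont.intervalIntegrable _ _) (intervalIntegrable_const)
      intro θ _
      apply hC
      rw [mem_ball_zero_iff]
      have : ‖circleMap 0 ρ θ‖ = |ρ| := norm_circleMap_zero ρ θ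
      rw [this, abs_of_pos h0]; exact h1
    simpa [mul_comm] using h2
  rw [hρc] at hbm
  have hle := norm_cauchyPowerSeries_le g 0 ρ m
  rw [← hbm] at hle
  have hρm : |ρ|⁻¹ ^ m = (ρ ^ m)⁻¹ := by
    rw [abs_of_pos h0, inv_pow]
  have hpow : 0 < ρ ^ m := pow_pos h0 m
  have h4 : ‖b m‖ ≤ ((2 * Real.pi)⁻¹ * (2 * Real.pi * C)) * (ρ ^ m)⁻¹ := by
    refine le_trans hle ?_
    rw [hρm]
    apply mul_le_mul_of_nonneg_right _ (by positivity)
    apply mul_le_mul_of_nonneg_left hint (by positivity)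
  have h5 : (2 * Real.pi)⁻¹ * (2 * Real.pi * C) = C := by
    field_simp
  rw [h5] at h4
  calc ‖b m‖ * ρ ^ m ≤ (C * (ρ ^ m)⁻¹) * ρ ^ m :=
        mul_le_mul_of_nonneg_right h4 hpow.le
    _ = C := by field_simp

lemma coeff_le {b : ℕ → ℂ} {g : ℂ → ℂ} {C : ℝ}
    (hd : DifferentiableOn ℂ g (Metric.ball (0:ℂ) 1))
    (hC : ∀ z ∈ Metric.ball (0:ℂ) 1, ‖g z‖ ≤ C)
    (hrep : ∀ z ∈ Metric.ball (0:ℂ) 1, HasSum (fun n => b n * z ^ n) (g z))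
    (m : ℕ) : ‖b m‖ ≤ C := by
  have key : ∀ ρ : ℝ, ρ ∈ Set.Ioo (0:ℝ) 1 → ‖b m‖ * ρ ^ m ≤ C := fun ρ hρ =>
    coeff_mul_pow_le hd hC hrep hρ.1 hρ.2 m
  have h1 : Tendsto (fun ρ : ℝ => ‖b m‖ * ρ ^ m) (nhdsWithin 1 (Set.Iio 1)) (nhds (‖b m‖)) := by
    have : Continuous fun ρ : ℝ => ‖b m‖ * ρ ^ m := by continuity
    have h2 := (this.tendsto 1).mono_left (nhdsWithin_le_nhds (s := Set.Iio (1:ℝ)))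
    simpa using h2
  apply le_of_tendsto h1
  filter_upwards [Ioo_mem_nhdsLT_of_mem (show (1:ℝ) ∈ Set.Ioc 0 1 from ⟨one_pos, le_rfl⟩)]
    with ρ hρ using key ρ hρ


lemma norm_eq_one_of_pow {u : ℂ} {n : ℕ} (hn : n ≠ 0) (h : u ^ n = 1) : ‖u‖ = 1 := by
  have h1 : ‖u‖ ^ n = 1 := by rw [← norm_pow, h, norm_one]
  by_contra hne
  rcases lt_or_gt_of_ne hne with hlt | hgt
  · have := pow_lt_one₀ (norm_nonneg u) hlt hn
    rw [h1] at this; exact lt_irrefl _ this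
  · have := one_lt_pow₀ hgt hn
    rw [h1] at this; exact lt_irrefl _ this

/-- Root-of-unity filtering of a power series. -/
lemma rep_filter {b : ℕ → ℂ} {g : ℂ → ℂ}
    (hrep : ∀ z ∈ Metric.ball (0:ℂ) 1, HasSum (fun n => b n * z ^ n) (g z))
    {n : ℕ} (hn : n ≠ 0) {z : ℂ} (hz : z ∈ Metric.ball (0:ℂ) 1) :
    HasSum (fun k => b (n * k) * z ^ (n * k))
      ((n : ℂ)⁻¹ * ∑ j ∈ Finset.range n, g (Complex.exp (2 * Real.pi * Complex.I / n) ^ j * z)) := by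
  set ω : ℂ := Complex.exp (2 * Real.pi * Complex.I / n) with hω
  have hprim : IsPrimitiveRoot ω n := Complex.isPrimitiveRoot_exp n hn
  have hωn : ω ^ n = 1 := hprim.pow_eq_one
  have hnorm : ∀ j : ℕ, ‖ω ^ j‖ = 1 := by
    intro j
    apply norm_eq_one_of_pow hn
    rw [← pow_mul, mul_comm, pow_mul, hωn, one_pow]
  have hmem : ∀ j : ℕ, ω ^ j * z ∈ Metric.ball (0:ℂ) 1 := by
    intro j
    rw [mem_ball_zero_iff, norm_mul, hnorm, one_mul]
    exact mem_ball_zero_iff.1 hz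
  have h1 : HasSum (fun t => ∑ j ∈ Finset.range n, b t * (ω ^ j * z) ^ t)
      (∑ j ∈ Finset.range n, g (ω ^ j * z)) :=
    hasSum_sum fun j _ => hrep _ (hmem j)
  have h2 : (fun t => ∑ j ∈ Finset.range n, b t * (ω ^ j * z) ^ t)
      = fun t => (if n ∣ t then (n : ℂ) else 0) * (b t * z ^ t) := by
    funext t
    have he : ∀ j, b t * (ω ^ j * z) ^ t = (ω ^ t) ^ j * (b t * z ^ t) := by
      intro j
      rw [mul_pow, ← pow_mul, mul_comm j t, pow_mul]
      ring
    rw [Finset.sum_congr rfl fun j _ => he j, ← Finset.sum_mul]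
    congr 1
    by_cases hdvd : n ∣ t
    · rw [if_pos hdvd]
      obtain ⟨s, rfl⟩ := hdvd
      have : ω ^ (n * s) = 1 := by rw [pow_mul, hωn, one_pow]
      simp [this]
    · rw [if_neg hdvd]
      have hne : ω ^ t ≠ 1 := fun h => hdvd ((hprim.pow_eq_one_iff_dvd t).1 h)
      rw [geom_sum_eq hne, ← pow_mul, mul_comm t n, pow_mul, hωn, one_pow, sub_self, zero_div]
  rw [h2] at h1
  have hinj : Function.Injective (fun k : ℕ => n * k) := fun a b h => by
    exact Nat.eq_of_mul_eq_mul_left (Nat.pos_of_ne_zero hn) h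
  have hsupp : ∀ t, t ∉ Set.range (fun k : ℕ => n * k) →
      (if n ∣ t then (n : ℂ) else 0) * (b t * z ^ t) = 0 := by
    intro t ht
    rw [if_neg, zero_mul]
    rintro ⟨s, rfl⟩
    exact ht ⟨s, rfl⟩
  have h3 := (Function.Injective.hasSum_iff hinj hsupp).2 h1
  have h4 : ((fun t => (if n ∣ t then (n : ℂ) else 0) * (b t * z ^ t)) ∘ (fun k : ℕ => n * k))
      = fun k => (n : ℂ) * (b (n * k) * z ^ (n * k)) := by
    funext k
    simp [Function.comp, Dvd.intro k rfl]
  rw [h4] at h3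
  have h5 := h3.mul_left ((n : ℂ)⁻¹)
  have hnne : (n : ℂ) ≠ 0 := Nat.cast_ne_zero.2 hn
  have h6 : (fun k => (n:ℂ)⁻¹ * ((n:ℂ) * (b (n * k) * z ^ (n * k))))
      = fun k => b (n * k) * z ^ (n * k) := by
    funext k
    rw [← mul_assoc, inv_mul_cancel₀ hnne, one_mul]
  rwa [h6] at h5

/-- Möbius norm identity. -/
lemma mobius_identity (c w : ℂ) :
    ‖1 - (starRingEnd ℂ) c * w‖ ^ 2 - ‖w - c‖ ^ 2 = (1 - ‖c‖ ^ 2) * (1 - ‖w‖ ^ 2) := by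
  simp only [Complex.sq_norm, Complex.normSq_apply, Complex.sub_re,
    Complex.sub_im, Complex.mul_re, Complex.mul_im, Complex.one_re, Complex.one_im,
    Complex.conj_re, Complex.conj_im]
  ring

/-- Schwarz–Pick at the origin, strict version. -/
lemma schwarz_pick_zero_strict {g : ℂ → ℂ}
    (hd : DifferentiableOn ℂ g (Metric.ball (0:ℂ) 1))
    (hm : MapsTo g (Metric.ball (0:ℂ) 1) (Metric.ball (0:ℂ) 1)) :
    ‖deriv g 0‖ ≤ 1 - ‖g 0‖ ^ 2 := by
  set c : ℂ := g 0 with hc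
  have hc1 : ‖c‖ < 1 := by
    have := hm (mem_ball_self one_pos)
    rwa [mem_ball_zero_iff] at this
  set φ : ℂ → ℂ := fun w => (w - c) / (1 - (starRingEnd ℂ) c * w) with hφ
  have hden : ∀ w : ℂ, ‖w‖ ≤ 1 → 1 - (starRingEnd ℂ) c * w ≠ 0 := by
    intro w hw h0
    have h1 : (starRingEnd ℂ) c * w = 1 := by
      have := sub_eq_zero.1 h0; exact this.symm
    have h2 : ‖(starRingEnd ℂ) c * w‖ = 1 := by rw [h1, norm_one]
    rw [norm_mul, RCLike.norm_conj] at h2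
    nlinarith [norm_nonneg w, norm_nonneg c]
  have hφmaps : ∀ w : ℂ, ‖w‖ < 1 → ‖φ w‖ < 1 := by
    intro w hw
    have hd0 := hden w hw.le
    have hpos : 0 < ‖1 - (starRingEnd ℂ) c * w‖ := norm_pos_iff.2 hd0
    rw [hφ]
    simp only
    rw [norm_div, div_lt_one hpos]
    have key := mobius_identity c w
    have hprod : 0 < (1 - ‖c‖ ^ 2) * (1 - ‖w‖ ^ 2) := by
      apply mul_pos <;> nlinarith [norm_nonneg c, norm_nonneg w]
    nlinarith [key, hprod, norm_nonneg (w - c), norm_nonneg (1 - (starRingEnd ℂ) c * w)]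
  set h : ℂ → ℂ := fun z => φ (g z) with hh
  have hhd : DifferentiableOn ℂ h (Metric.ball (0:ℂ) 1) := by
    apply DifferentiableOn.div
    · exact hd.sub (differentiableOn_const c)
    · exact (differentiableOn_const 1).sub ((differentiableOn_const _).mul hd)
    · intro z hz
      exact hden (g z) (le_of_lt (mem_ball_zero_iff.1 (hm hz)))
  have hh0 : h 0 = 0 := by
    rw [hh]
    simp only [hφ]
    rw [← hc, sub_self, zero_div]
  have hmaps : MapsTo h (Metric.ball (0:ℂ) 1) (Metric.ball (h 0) 1) := by
    intro z hz
    rw [hh0, mem_ball_zero_iff]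
    exact hφmaps _ (mem_ball_zero_iff.1 (hm hz))
  have hsch := Complex.norm_deriv_le_div_of_mapsTo_ball hhd (hmaps.mono_right ball_subset_closedBall) one_pos
  rw [div_one] at hsch
  -- chain rule
  have hgd : DifferentiableAt ℂ g 0 :=
    (hd.differentiableAt (isOpen_ball.mem_nhds (mem_ball_self one_pos)))
  have hDnc : 1 - (starRingEnd ℂ) c * c = ((1 - ‖c‖ ^ 2 : ℝ) : ℂ) := by
    have : c * (starRingEnd ℂ) c = ((Complex.normSq c : ℝ) : ℂ) := Complex.mul_conj c
    rw [mul_comm] at this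
    rw [this]
    push_cast
    rw [Complex.normSq_eq_norm_sq]
    push_cast
    ring
  have hDne : 1 - (starRingEnd ℂ) c * c ≠ 0 := hden c hc1.le
  have hφd : HasDerivAt φ ((1 - (starRingEnd ℂ) c * c)⁻¹) c := by
    have hN : HasDerivAt (fun w : ℂ => w - c) 1 c := (hasDerivAt_id c).sub_const c
    have hD : HasDerivAt (fun w : ℂ => 1 - (starRingEnd ℂ) c * w) (-(starRingEnd ℂ) c) c := by
      have := ((hasDerivAt_id c).const_mul ((starRingEnd ℂ) c)).const_sub 1
      simpa using this
    have := hN.div hD hDne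
    refine (this : HasDerivAt φ _ c).congr_deriv ?_
    field_simp
    ring
  have hcomp : HasDerivAt h ((1 - (starRingEnd ℂ) c * c)⁻¹ * deriv g 0) 0 := by
    have := hφd.comp 0 hgd.hasDerivAt
    exact this
  have hderiv : deriv h 0 = (1 - (starRingEnd ℂ) c * c)⁻¹ * deriv g 0 := hcomp.deriv
  have hnormc : ‖1 - (starRingEnd ℂ) c * c‖ = 1 - ‖c‖ ^ 2 := by
    rw [hDnc, Complex.norm_real, Real.norm_of_nonneg (by nlinarith [norm_nonneg c])]
  have h2 : ‖deriv g 0‖ = (1 - ‖c‖ ^ 2) * ‖deriv h 0‖ := by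
    rw [hderiv, norm_mul, norm_inv, hnormc, ← mul_assoc]
    rw [mul_inv_cancel₀ (by nlinarith [norm_nonneg c] : (1 - ‖c‖^2) ≠ 0), one_mul]
  rw [h2]
  calc (1 - ‖c‖ ^ 2) * ‖deriv h 0‖ ≤ (1 - ‖c‖ ^ 2) * 1 :=
        mul_le_mul_of_nonneg_left hsch (by nlinarith [norm_nonneg c])
    _ = 1 - ‖g 0‖ ^ 2 := by rw [mul_one, hc]

/-- Schwarz–Pick at the origin. -/
lemma schwarz_pick_zero {g : ℂ → ℂ}
    (hd : DifferentiableOn ℂ g (Metric.ball (0:ℂ) 1))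
    (hb : ∀ z ∈ Metric.ball (0:ℂ) 1, ‖g z‖ ≤ 1) :
    ‖deriv g 0‖ ≤ 1 - ‖g 0‖ ^ 2 := by
  have key : ∀ t : ℝ, t ∈ Set.Ioo (0:ℝ) 1 → t * ‖deriv g 0‖ ≤ 1 - t ^ 2 * ‖g 0‖ ^ 2 := by
    intro t ht
    set gt : ℂ → ℂ := fun z => (t : ℂ) * g z with hgt
    have hdt : DifferentiableOn ℂ gt (Metric.ball (0:ℂ) 1) := (differentiableOn_const _).mul hd
    have hmt : MapsTo gt (Metric.ball (0:ℂ) 1) (Metric.ball (0:ℂ) 1) := by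
      intro z hz
      rw [mem_ball_zero_iff, hgt]
      simp only
      rw [norm_mul, Complex.norm_real, Real.norm_of_nonneg ht.1.le]
      calc t * ‖g z‖ ≤ t * 1 := mul_le_mul_of_nonneg_left (hb z hz) ht.1.le
        _ < 1 := by rw [mul_one]; exact ht.2
    have hsp := schwarz_pick_zero_strict hdt hmt
    have hder : deriv gt 0 = (t : ℂ) * deriv g 0 := by
      rw [hgt]
      exact deriv_const_mul (t : ℂ)
        (hd.differentiableAt (isOpen_ball.mem_nhds (mem_ball_self one_pos)))
    have hval : gt 0 = (t : ℂ) * g 0 := rfl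
    rw [hder, hval, norm_mul, norm_mul, Complex.norm_real, Real.norm_of_nonneg ht.1.le,
      mul_pow] at hsp
    exact hsp
  have h1 : Tendsto (fun t : ℝ => t * ‖deriv g 0‖) (nhdsWithin 1 (Set.Iio 1))
      (nhds (‖deriv g 0‖)) := by
    have hcont : Continuous fun t : ℝ => t * ‖deriv g 0‖ := by continuity
    have h2 := (hcont.tendsto 1).mono_left (nhdsWithin_le_nhds (s := Set.Iio (1:ℝ)))
    simpa using h2
  have h2 : Tendsto (fun t : ℝ => 1 - t ^ 2 * ‖g 0‖ ^ 2) (nhdsWithin 1 (Set.Iio 1))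
      (nhds (1 - ‖g 0‖ ^ 2)) := by
    have hcont : Continuous fun t : ℝ => 1 - t ^ 2 * ‖g 0‖ ^ 2 := by continuity
    have h3 := (hcont.tendsto 1).mono_left (nhdsWithin_le_nhds (s := Set.Iio (1:ℝ)))
    simpa using h3
  refine le_of_tendsto_of_tendsto h1 h2 ?_
  filter_upwards [Ioo_mem_nhdsLT_of_mem (show (1:ℝ) ∈ Set.Ioc 0 1 from ⟨one_pos, le_rfl⟩)]
    with t ht using key t ht


/-- The key coefficient inequality `‖b n‖ ≤ 1 - ‖b 0‖²`. -/
lemma coeff_sq_bound {b : ℕ → ℂ} {g : ℂ → ℂ}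
    (hd : DifferentiableOn ℂ g (Metric.ball (0:ℂ) 1))
    (hb : ∀ z ∈ Metric.ball (0:ℂ) 1, ‖g z‖ ≤ 1)
    (hrep : ∀ z ∈ Metric.ball (0:ℂ) 1, HasSum (fun n => b n * z ^ n) (g z))
    {n : ℕ} (hn : n ≠ 0) : ‖b n‖ ≤ 1 - ‖b 0‖ ^ 2 := by
  have hble : ∀ m, ‖b m‖ ≤ 1 := coeff_le hd hb hrep
  set q := FormalMultilinearSeries.ofScalars ℂ (fun k => b (n * k)) with hqdef
  have hrad : 1 ≤ q.radius := by
    apply ENNReal.le_of_forall_nnreal_lt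
    intro ρ hρ
    have hρ1 : (ρ : ℝ) < 1 := by exact_mod_cast hρ
    apply FormalMultilinearSeries.le_radius_of_bound _ 1
    intro k
    rw [hqdef, FormalMultilinearSeries.ofScalars_norm]
    calc ‖b (n * k)‖ * (ρ:ℝ) ^ k ≤ 1 * 1 ^ k := by
          apply mul_le_mul (hble _) (pow_le_pow_left₀ ρ.coe_nonneg hρ1.le k) (by positivity) one_pos.le
      _ = 1 := by norm_num
  have hrpos : (0:ENNReal) < q.radius := lt_of_lt_of_le one_pos hrad
  set h : ℂ → ℂ := q.sum with hhdef
  have hfp : HasFPowerSeriesOnBall h q 0 1 :=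
    (q.hasFPowerSeriesOnBall hrpos).mono one_pos hrad
  have hsum_eq : ∀ w ∈ Metric.ball (0:ℂ) 1, HasSum (fun k => b (n * k) * w ^ k) (h w) := by
    intro w hw
    have hw' : w ∈ Metric.eball (0:ℂ) 1 := by
      rw [mem_emetric_ball_zero_iff, ← ofReal_norm, ENNReal.ofReal_lt_one]
      exact_mod_cast mem_ball_zero_iff.1 hw
    have := hfp.hasSum hw'
    rw [zero_add] at this
    convert this using 3 with k
    · rfl
    rw [hqdef, FormalMultilinearSeries.ofScalars_apply_eq, smul_eq_mul]
  have hdh : DifferentiableOn ℂ h (Metric.ball (0:ℂ) 1) := by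
    have := hfp.differentiableOn
    rwa [← ENNReal.coe_one, Metric.emetric_ball_nnreal, NNReal.coe_one] at this
  have hbd : ∀ w ∈ Metric.ball (0:ℂ) 1, ‖h w‖ ≤ 1 := by
    intro w hw
    obtain ⟨z, hzn⟩ : ∃ z : ℂ, z ^ n = w :=
      IsAlgClosed.exists_pow_nat_eq w (Nat.pos_of_ne_zero hn)
    have hz1 : z ∈ Metric.ball (0:ℂ) 1 := by
      rw [mem_ball_zero_iff]
      by_contra hge
      push_neg at hge
      have : (1:ℝ) ≤ ‖w‖ := by
        calc (1:ℝ) = 1 ^ n := (one_pow n).symm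
          _ ≤ ‖z‖ ^ n := pow_le_pow_left₀ one_pos.le hge n
          _ = ‖w‖ := by rw [← norm_pow, hzn]
      exact absurd (mem_ball_zero_iff.1 hw) (not_lt.2 this)
    have hfil := rep_filter hrep hn hz1
    have hfil' : HasSum (fun k => b (n * k) * w ^ k)
        ((n : ℂ)⁻¹ * ∑ j ∈ Finset.range n,
          g (Complex.exp (2 * Real.pi * Complex.I / n) ^ j * z)) := by
      convert hfil using 2 with k
      rw [← hzn, ← pow_mul]
    have heq := (hsum_eq w hw).unique hfil'
    rw [heq, norm_mul, norm_inv, Complex.norm_natCast]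
    have hωnorm := norm_eq_one_of_pow hn (Complex.isPrimitiveRoot_exp n hn).pow_eq_one
    have hsum_le : ‖∑ j ∈ Finset.range n,
        g (Complex.exp (2 * Real.pi * Complex.I / n) ^ j * z)‖ ≤ n := by
      refine le_trans (norm_sum_le _ _) ?_
      have hone : ∀ j ∈ Finset.range n,
          ‖g (Complex.exp (2 * Real.pi * Complex.I / n) ^ j * z)‖ ≤ 1 := by
        intro j _
        apply hb
        rw [mem_ball_zero_iff, norm_mul, norm_pow, hωnorm, one_pow, one_mul]
        exact mem_ball_zero_iff.1 hz1
      calc ∑ j ∈ Finset.range n, ‖g (Complex.exp (2 * Real.pi * Complex.I / n) ^ j * z)‖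
          ≤ ∑ _j ∈ Finset.range n, 1 := Finset.sum_le_sum hone
        _ = n := by simp
    have hnpos : (0:ℝ) < n := by exact_mod_cast Nat.pos_of_ne_zero hn
    calc (n:ℝ)⁻¹ * ‖∑ j ∈ Finset.range n,
          g (Complex.exp (2 * Real.pi * Complex.I / n) ^ j * z)‖
        ≤ (n:ℝ)⁻¹ * n := mul_le_mul_of_nonneg_left hsum_le (by positivity)
      _ = 1 := inv_mul_cancel₀ hnpos.ne'
  have hh0 : h 0 = b 0 := by
    have h1 := hsum_eq 0 (mem_ball_self one_pos)
    have h2 : HasSum (fun k => b (n * k) * (0:ℂ) ^ k) (b 0) := by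
      have := hasSum_single (f := fun k => b (n * k) * (0:ℂ) ^ k) 0 (by
        intro k hk
        simp [zero_pow hk])
      simpa using this
    exact h1.unique h2
  have hderiv : deriv h 0 = b n := by
    rw [hfp.hasFPowerSeriesAt.deriv]
    exact (FormalMultilinearSeries.ofScalars_apply_eq (c := fun k => b (n * k)) (1:ℂ) 1).trans
      (by simp)
  have hsp := schwarz_pick_zero hdh hbd
  rw [hderiv, hh0] at hsp
  exact hsp

lemma summable_aux {b : ℕ → ℂ} (hble : ∀ n, ‖b n‖ ≤ 1) {r : ℝ} (h0 : 0 ≤ r) (h1 : r < 1) :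
    Summable fun n => ‖b n‖ * r ^ n := by
  apply Summable.of_nonneg_of_le (fun n => by positivity) (fun n => ?_)
    (summable_geometric_of_lt_one h0 h1)
  calc ‖b n‖ * r ^ n ≤ 1 * r ^ n := mul_le_mul_of_nonneg_right (hble n) (by positivity)
    _ = r ^ n := one_mul _

/-- Bohr's classical inequality on `r ≤ 1/3`. -/
lemma bohr_le_one {b : ℕ → ℂ} {g : ℂ → ℂ}
    (hd : DifferentiableOn ℂ g (Metric.ball (0:ℂ) 1))
    (hb : ∀ z ∈ Metric.ball (0:ℂ) 1, ‖g z‖ ≤ 1)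
    (hrep : ∀ z ∈ Metric.ball (0:ℂ) 1, HasSum (fun n => b n * z ^ n) (g z))
    {r : ℝ} (hr0 : 0 ≤ r) (hr : r ≤ 1/3) : ∑' n, ‖b n‖ * r ^ n ≤ 1 := by
  have hr1 : r < 1 := lt_of_le_of_lt hr (by norm_num)
  have hble : ∀ m, ‖b m‖ ≤ 1 := coeff_le hd hb hrep
  have hA0 : (0:ℝ) ≤ ‖b 0‖ := norm_nonneg _
  have hA1 : ‖b 0‖ ≤ 1 := hble 0
  have hcoef : ∀ m : ℕ, ‖b (m+1)‖ ≤ 1 - ‖b 0‖ ^ 2 := fun m =>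
    coeff_sq_bound hd hb hrep (Nat.succ_ne_zero m)
  have hsum := summable_aux hble hr0 hr1
  rw [Summable.tsum_eq_zero_add hsum]
  have htail : ∑' m, ‖b (m+1)‖ * r ^ (m+1) ≤ (1 - ‖b 0‖ ^ 2) * r * (1 - r)⁻¹ := by
    have hsum2 : Summable fun m => ‖b (m+1)‖ * r ^ (m+1) := (_root_.summable_nat_add_iff 1).2 hsum
    have hsum3 : Summable fun m : ℕ => (1 - ‖b 0‖ ^ 2) * r * r ^ m :=
      (summable_geometric_of_lt_one hr0 hr1).mul_left _
    calc ∑' m, ‖b (m+1)‖ * r ^ (m+1) ≤ ∑' m, (1 - ‖b 0‖ ^ 2) * r * r ^ m := by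
          apply Summable.tsum_le_tsum _ hsum2 hsum3
          intro m
          rw [pow_succ]
          calc ‖b (m+1)‖ * (r ^ m * r) ≤ (1 - ‖b 0‖ ^ 2) * (r ^ m * r) :=
                mul_le_mul_of_nonneg_right (hcoef m) (by positivity)
            _ = (1 - ‖b 0‖ ^ 2) * r * r ^ m := by ring
      _ = (1 - ‖b 0‖ ^ 2) * r * ∑' m : ℕ, r ^ m := tsum_mul_left
      _ = (1 - ‖b 0‖ ^ 2) * r * (1 - r)⁻¹ := by
          rw [tsum_geometric_of_lt_one hr0 hr1]
  have hfrac : (1 - ‖b 0‖ ^ 2) * r * (1 - r)⁻¹ ≤ (1 - ‖b 0‖ ^ 2) / 2 := by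
    have h2 : r * (1 - r)⁻¹ ≤ 1 / 2 := by
      rw [← div_eq_mul_inv, div_le_div_iff₀ (by linarith) (by norm_num)]
      linarith
    calc (1 - ‖b 0‖ ^ 2) * r * (1 - r)⁻¹ = (1 - ‖b 0‖ ^ 2) * (r * (1 - r)⁻¹) := by ring
      _ ≤ (1 - ‖b 0‖ ^ 2) * (1 / 2) := mul_le_mul_of_nonneg_left h2 (by nlinarith)
      _ = (1 - ‖b 0‖ ^ 2) / 2 := by ring
  have : ‖b 0‖ * r ^ 0 = ‖b 0‖ := by norm_num
  rw [this]
  nlinarith [htail, hfrac]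

lemma r_ratio {r A : ℝ} (hr0 : 0 ≤ r) (hr : r ≤ 1/3) (hA0 : 0 ≤ A) (hA1 : A ≤ 1) :
    r / (1 - A * r) ≤ 1 / (3 - A) := by
  have h1 : 0 < 1 - A * r := by nlinarith
  have h2 : 0 < 3 - A := by linarith
  rw [div_le_div_iff₀ h1 h2]
  nlinarith

lemma r_sq {r : ℝ} (hr0 : 0 ≤ r) (hr : r ≤ 1/3) : r^2 / (1 - r^2)^2 ≤ 9/64 := by
  have hq : r^2 ≤ 1/9 := by nlinarith
  have h1 : 0 < (1 - r^2)^2 := by nlinarith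
  rw [div_le_div_iff₀ h1 (by norm_num)]
  nlinarith [mul_nonneg (sub_nonneg.2 hq) (show (0:ℝ) ≤ 9 - r^2 by nlinarith)]

lemma final_poly {A : ℝ} (h0 : 0 ≤ A) (h1 : A ≤ 1) :
    A + (1 - A^2)/(3 - A) + 16/9 * ((1 - A^2)^2 * (9/64) / (1 - (1 - A^2)^2 * (9/64))) ≤ 1 := by
  set c : ℝ := 1 - A^2 with hc
  have hc0 : 0 ≤ c := by nlinarith
  have hc1 : c ≤ 1 := by nlinarith
  have hd1 : (0:ℝ) < 3 - A := by linarith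
  have h64 : (0:ℝ) < 64 - 9 * c^2 := by nlinarith
  have e2 : c^2 * (9/64) / (1 - c^2 * (9/64)) = 9 * c^2 / (64 - 9 * c^2) := by
    rw [show (1 - c^2 * (9/64) : ℝ) = (64 - 9 * c^2)/64 by ring]
    field_simp
  rw [e2]
  set u : ℝ := c/(3 - A) with hu'
  set v : ℝ := 9 * c^2/(64 - 9 * c^2) with hv'
  have hu : u * (3 - A) = c := div_mul_cancel₀ _ hd1.ne'
  have hv : v * (64 - 9 * c^2) = 9 * c^2 := div_mul_cancel₀ _ h64.ne'
  have key : (1 - A - u - 16/9 * v) * ((3 - A) * (64 - 9 * c^2))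
      = (1 - A)^3 * (62 - 18*A + 2*A^2 + 18*A^3) := by
    have expand : (1 - A - u - 16/9 * v) * ((3 - A) * (64 - 9 * c^2))
        = (1 - A) * ((3 - A) * (64 - 9 * c^2)) - (u * (3 - A)) * (64 - 9 * c^2)
          - 16/9 * ((v * (64 - 9 * c^2)) * (3 - A)) := by ring
    rw [expand, hu, hv, hc]
    ring
  have hQ : (0:ℝ) ≤ 62 - 18*A + 2*A^2 + 18*A^3 := by nlinarith
  have hcube : (0:ℝ) ≤ (1 - A)^3 := pow_nonneg (by linarith) 3
  have hprod : (0:ℝ) < (3 - A) * (64 - 9 * c^2) := mul_pos hd1 h64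
  have h2 : 0 ≤ (1 - A - u - 16/9 * v) * ((3 - A) * (64 - 9 * c^2)) :=
    key ▸ mul_nonneg hcube hQ
  have hX : 0 ≤ 1 - A - u - 16/9 * v := by
    by_contra hneg
    push_neg at hneg
    nlinarith [mul_pos (neg_pos.2 hneg) hprod]
  linarith

lemma T2_bound {a : ℕ → ℂ} {cc r : ℝ} (hc0 : 0 ≤ cc)
    (hcoef : ∀ n : ℕ, n ≠ 0 → ‖a n‖ ≤ cc) (hr0 : 0 ≤ r) (hr : r ≤ 1/3) :
    ∑' n : ℕ, (n:ℝ) * ‖a n‖^2 * r^(2*n) ≤ cc^2 * (9/64) := by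
  have hrsq : r^2 < 1 := by nlinarith
  have hrsq' : ‖r^2‖ < 1 := by rw [Real.norm_of_nonneg (by positivity)]; exact hrsq
  have hsumR : Summable fun n : ℕ => cc^2 * ((n:ℝ) * (r^2)^n) := by
    apply Summable.mul_left
    have := summable_pow_mul_geometric_of_norm_lt_one 1 hrsq'
    exact this.congr fun n => by rw [pow_one]
  have hterm : ∀ n : ℕ, (n:ℝ) * ‖a n‖^2 * r^(2*n) ≤ cc^2 * ((n:ℝ) * (r^2)^n) := by
    intro n
    rcases Nat.eq_zero_or_pos n with rfl | hpos
    · simp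
    · have h1 : ‖a n‖^2 ≤ cc^2 := by
        have := hcoef n hpos.ne'
        nlinarith [norm_nonneg (a n)]
      have h2 : r^(2*n) = (r^2)^n := by rw [← pow_mul]
      rw [h2]
      calc (n:ℝ) * ‖a n‖^2 * (r^2)^n ≤ (n:ℝ) * cc^2 * (r^2)^n := by
            apply mul_le_mul_of_nonneg_right _ (by positivity)
            exact mul_le_mul_of_nonneg_left h1 (by positivity)
        _ = cc^2 * ((n:ℝ) * (r^2)^n) := by ring
  have hsumL : Summable fun n : ℕ => (n:ℝ) * ‖a n‖^2 * r^(2*n) :=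
    Summable.of_nonneg_of_le (fun n => by positivity) hterm hsumR
  calc ∑' n : ℕ, (n:ℝ) * ‖a n‖^2 * r^(2*n) ≤ ∑' n : ℕ, cc^2 * ((n:ℝ) * (r^2)^n) :=
        Summable.tsum_le_tsum hterm hsumL hsumR
    _ = cc^2 * ∑' n : ℕ, (n:ℝ) * (r^2)^n := tsum_mul_left
    _ = cc^2 * (r^2 / (1 - r^2)^2) := by
        rw [tsum_coe_mul_geometric_of_norm_lt_one hrsq']
    _ ≤ cc^2 * (9/64) := mul_le_mul_of_nonneg_left (r_sq hr0 hr) (by positivity)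

set_option maxHeartbeats 2000000 in
/-- The refined tail estimate `Σ_{m≥1} ‖a m‖ rᵐ ≤ (1-a²) r/(1-ar)` for `r ≤ 1/3`. -/
lemma tail_bound {f : ℂ → ℂ}
    (hd : DifferentiableOn ℂ f (Metric.ball (0:ℂ) 1))
    (hb : ∀ z ∈ Metric.ball (0:ℂ) 1, ‖f z‖ ≤ 1)
    {a : ℕ → ℂ}
    (ha : ∀ z ∈ Metric.ball (0:ℂ) 1, HasSum (fun n : ℕ => a n * z ^ n) (f z))
    {r : ℝ} (hr0 : 0 ≤ r) (hr : r ≤ 1/3) (hAlt : ‖a 0‖ < 1) :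
    ∑' m : ℕ, ‖a (m+1)‖ * r^(m+1) ≤ (1 - ‖a 0‖^2) * r / (1 - ‖a 0‖ * r) := by
  have hr1 : r < 1 := by linarith
  set A : ℝ := ‖a 0‖ with hAdef
  have hA0 : 0 ≤ A := norm_nonneg _
  have hc0 : (0:ℝ) < 1 - A^2 := by nlinarith
  set lam : ℂ := a 0 with hlamdef
  set mu : ℂ := -((starRingEnd ℂ) lam) with hmudef
  have hmu : ‖mu‖ = A := by rw [hmudef, norm_neg, RCLike.norm_conj]
  have hf0 : f 0 = lam := by
    have h1 := ha 0 (mem_ball_self one_pos)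
    have h2 : HasSum (fun n : ℕ => a n * (0:ℂ)^n) (a 0) := by
      have := hasSum_single (f := fun n : ℕ => a n * (0:ℂ)^n) 0
        (by intro n hn; simp [zero_pow hn])
      simpa using this
    exact h1.unique h2
  set ω : ℂ → ℂ := fun z => (f z - lam)/(1 - (starRingEnd ℂ) lam * f z) with hωdef
  have hden : ∀ z ∈ Metric.ball (0:ℂ) 1, 1 - (starRingEnd ℂ) lam * f z ≠ 0 := by
    intro z hz h0
    have h1 : (starRingEnd ℂ) lam * f z = 1 := by
      have := sub_eq_zero.1 h0; exact this.symm
    have h2 : ‖(starRingEnd ℂ) lam * f z‖ = 1 := by rw [h1, norm_one]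
    rw [norm_mul, RCLike.norm_conj] at h2
    nlinarith [hb z hz, norm_nonneg (f z)]
  have hωd : DifferentiableOn ℂ ω (Metric.ball (0:ℂ) 1) := by
    apply DifferentiableOn.div (hd.sub (differentiableOn_const _))
      ((differentiableOn_const _).sub ((differentiableOn_const _).mul hd)) hden
  have hωb : ∀ z ∈ Metric.ball (0:ℂ) 1, ‖ω z‖ ≤ 1 := by
    intro z hz
    have hkey := mobius_identity lam (f z)
    have hpos : 0 < ‖1 - (starRingEnd ℂ) lam * f z‖ := norm_pos_iff.2 (hden z hz)
    rw [hωdef]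
    simp only
    rw [norm_div, div_le_one hpos]
    nlinarith [hkey, mul_nonneg hc0.le (show (0:ℝ) ≤ 1 - ‖f z‖^2 by
        nlinarith [hb z hz, norm_nonneg (f z)]),
      norm_nonneg (f z - lam), norm_nonneg (1 - (starRingEnd ℂ) lam * f z)]
  have hω0 : ω 0 = 0 := by
    rw [hωdef]
    simp only
    rw [hf0, sub_self, zero_div]
  set g1 : ℂ → ℂ := dslope ω 0 with hg1def
  have hg1d : DifferentiableOn ℂ g1 (Metric.ball (0:ℂ) 1) :=
    (differentiableOn_dslope (ball_mem_nhds 0 one_pos)).2 hωd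
  have hωz : ∀ z : ℂ, ω z = z * g1 z := by
    intro z
    rcases eq_or_ne z 0 with rfl | hz0
    · rw [hω0, zero_mul]
    · rw [hg1def, dslope_of_ne _ hz0, slope_def_field, hω0, sub_zero, sub_zero]
      field_simp
  have hg1b : ∀ z ∈ Metric.ball (0:ℂ) 1, ‖g1 z‖ ≤ 1 := by
    intro z hz
    by_contra hgt
    push_neg at hgt
    set R : ℝ := (1 + ‖g1 z‖)/2 with hRdef
    have hR1 : 1 < R := by rw [hRdef]; linarith
    have hmaps : MapsTo ω (Metric.ball (0:ℂ) 1) (Metric.ball (ω 0) R) := by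
      intro x hx
      rw [hω0, mem_ball_zero_iff]
      exact lt_of_le_of_lt (hωb x hx) hR1
    have hds := Complex.norm_dslope_le_div_of_mapsTo_ball hωd (hmaps.mono_right ball_subset_closedBall) hz
    rw [div_one] at hds
    rw [← hg1def] at hds
    rw [hRdef] at hds
    linarith
  -- powers of g1 and their coefficients
  have hHd : ∀ k : ℕ, DifferentiableOn ℂ (fun z => g1 z ^ (k+1)) (Metric.ball (0:ℂ) 1) :=
    fun k => hg1d.pow _
  have hHb : ∀ k : ℕ, ∀ z ∈ Metric.ball (0:ℂ) 1, ‖g1 z ^ (k+1)‖ ≤ 1 := by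
    intro k z hz
    rw [norm_pow]
    exact pow_le_one₀ (norm_nonneg _) (hg1b z hz)
  choose bk hbk using fun k => BohrKP.exists_rep (hHd k)
  have hbk1 : ∀ k m, ‖bk k m‖ ≤ 1 := fun k => coeff_le (hHd k) (hHb k) (hbk k)
  have hBohr : ∀ k, ∑' m, ‖bk k m‖ * r^m ≤ 1 :=
    fun k => bohr_le_one (hHd k) (hHb k) (hbk k) hr0 hr
  have hBsum : ∀ k, Summable fun m => ‖bk k m‖ * r^m :=
    fun k => summable_aux (hbk1 k) hr0 hr1
  set ck : ℕ → ℕ → ℂ := fun k m => if k+1 ≤ m then bk k (m - (k+1)) else 0 with hckdef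
  have hck_norm : ∀ k m, ‖ck k m‖ ≤ 1 := by
    intro k m
    rw [hckdef]
    dsimp only
    split
    · exact hbk1 _ _
    · rw [norm_zero]; norm_num
  have hck : ∀ k : ℕ, ∀ z ∈ Metric.ball (0:ℂ) 1,
      HasSum (fun m => ck k m * z^m) (ω z ^ (k+1)) := by
    intro k z hz
    have h1 := (hbk k z hz).mul_right (z^(k+1))
    have h2 : g1 z ^ (k+1) * z^(k+1) = ω z ^ (k+1) := by
      rw [hωz z, mul_pow]; ring
    rw [h2] at h1
    have hinj : Function.Injective (fun m : ℕ => m + (k+1)) := add_left_injective _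
    apply (Function.Injective.hasSum_iff hinj ?_).1 ?_
    · intro m hm
      have hmlt : ¬ (k+1 ≤ m) := by
        intro hle
        exact hm ⟨m - (k+1), Nat.sub_add_cancel hle⟩
      rw [hckdef]
      dsimp only
      rw [if_neg hmlt, zero_mul]
    · convert h1 using 1
      · rfl
      funext m
      show ck k (m + (k+1)) * z^(m+(k+1)) = bk k m * z^m * z^(k+1)
      rw [hckdef]
      dsimp only
      rw [if_pos (by omega), Nat.add_sub_cancel, pow_add]
      ring
  have hck_sum : ∀ k, Summable fun m => ‖ck k m‖ * r^m :=
    fun k => summable_aux (hck_norm k) hr0 hr1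
  have hck_tsum : ∀ k, ∑' m, ‖ck k m‖ * r^m ≤ r^(k+1) := by
    intro k
    have hinj : Function.Injective (fun m : ℕ => m + (k+1)) := add_left_injective _
    have hs1 := (hck_sum k).hasSum
    have hs2 := (Function.Injective.hasSum_iff hinj (by
      intro m hm
      have hmlt : ¬ (k+1 ≤ m) := by
        intro hle
        exact hm ⟨m - (k+1), Nat.sub_add_cancel hle⟩
      rw [hckdef]
      dsimp only
      rw [if_neg hmlt, norm_zero, zero_mul])).2 hs1
    have hs3 : HasSum (fun m => (‖bk k m‖ * r^m) * r^(k+1)) (∑' m, ‖ck k m‖ * r^m) := by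
      refine hs2.congr_fun ?_
      intro m
      show ‖bk k m‖ * r^m * r^(k+1) = ‖ck k (m + (k+1))‖ * r^(m+(k+1))
      rw [hckdef]
      dsimp only
      rw [if_pos (by omega), Nat.add_sub_cancel, pow_add]
      ring
    have hs4 := (hBsum k).hasSum.mul_right (r^(k+1))
    have heq := hs3.unique hs4
    rw [heq]
    calc (∑' m, ‖bk k m‖ * r^m) * r^(k+1) ≤ 1 * r^(k+1) :=
          mul_le_mul_of_nonneg_right (hBohr k) (by positivity)
      _ = r^(k+1) := one_mul _
  -- geometric expansion of f around the constant term
  have hnormSq : Complex.normSq lam = A^2 := by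
    rw [Complex.normSq_eq_norm_sq]
  have hconjlam : (starRingEnd ℂ) lam * lam = ((A^2 : ℝ) : ℂ) := by
    rw [mul_comm, Complex.mul_conj, hnormSq]
  have hgeom : ∀ z ∈ Metric.ball (0:ℂ) 1,
      HasSum (fun k => ((1 - A^2 : ℝ) : ℂ) * mu^k * (ω z)^(k+1)) (f z - lam) := by
    intro z hz
    have hu1 : ‖(starRingEnd ℂ) lam * ω z‖ < 1 := by
      rw [norm_mul, RCLike.norm_conj]
      calc ‖lam‖ * ‖ω z‖ ≤ ‖lam‖ * 1 := mul_le_mul_of_nonneg_left (hωb z hz) (norm_nonneg _)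
        _ = A := mul_one _
        _ < 1 := hAlt
    have hgeo := hasSum_geometric_of_norm_lt_one
      (ξ := -((starRingEnd ℂ) lam * ω z)) (by rw [norm_neg]; exact hu1)
    have hcne : ((1 - A^2 : ℝ) : ℂ) ≠ 0 := by
      exact_mod_cast (ne_of_gt hc0)
    have hkey : ((1 - A^2 : ℝ) : ℂ) * (ω z * (1 + (starRingEnd ℂ) lam * ω z)⁻¹) = f z - lam := by
      have hd1 := hden z hz
      have hω_eq : ω z * (1 - (starRingEnd ℂ) lam * f z) = f z - lam := by
        rw [hωdef]
        field_simp
        exact mul_div_cancel_right₀ _ (by rwa [mul_comm])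
      have hsum_den : 1 + (starRingEnd ℂ) lam * ω z
          = ((1 - A^2 : ℝ) : ℂ) / (1 - (starRingEnd ℂ) lam * f z) := by
        rw [eq_div_iff hd1]
        have hexp : (1 + (starRingEnd ℂ) lam * ω z) * (1 - (starRingEnd ℂ) lam * f z)
            = (1 - (starRingEnd ℂ) lam * f z)
              + (starRingEnd ℂ) lam * (ω z * (1 - (starRingEnd ℂ) lam * f z)) := by ring
        rw [hexp, hω_eq]
        have : 1 - (starRingEnd ℂ) lam * f z + (starRingEnd ℂ) lam * (f z - lam)
            = 1 - (starRingEnd ℂ) lam * lam := by ring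
        rw [this, hconjlam]
        push_cast
        ring
      rw [hsum_den, inv_div,
        show ((1 - A^2 : ℝ) : ℂ) * (ω z * ((1 - (starRingEnd ℂ) lam * f z) / ((1 - A^2 : ℝ) : ℂ)))
          = ω z * (1 - (starRingEnd ℂ) lam * f z) / ((1 - A^2 : ℝ) : ℂ) * ((1 - A^2 : ℝ) : ℂ)
          from by ring,
        div_mul_cancel₀ _ hcne, hω_eq]
    have h3 := hgeo.mul_left (((1 - A^2 : ℝ) : ℂ) * ω z)
    have h4 : ((1 - A^2 : ℝ) : ℂ) * ω z * (1 - -((starRingEnd ℂ) lam * ω z))⁻¹ = f z - lam := by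
      rw [sub_neg_eq_add, ← hkey]
      ring
    rw [h4] at h3
    refine h3.congr_fun ?_
    intro k
    have h5 : (-((starRingEnd ℂ) lam * ω z))^k = mu^k * (ω z)^k := by
      rw [← neg_mul, ← hmudef, mul_pow]
    rw [h5, pow_succ]
    ring
  -- partial sums and coefficient extraction
  set GK : ℕ → ℂ → ℂ := fun K z =>
    f z - lam - ∑ k ∈ Finset.range K, ((1 - A^2 : ℝ) : ℂ) * mu^k * (ω z)^(k+1) with hGKdef
  set BK : ℕ → ℕ → ℂ := fun K m =>
    a m - (if m = 0 then lam else 0)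
      - ∑ k ∈ Finset.range K, ((1 - A^2 : ℝ) : ℂ) * mu^k * ck k m with hBKdef
  have hGd : ∀ K, DifferentiableOn ℂ (GK K) (Metric.ball (0:ℂ) 1) := by
    intro K
    apply DifferentiableOn.sub (hd.sub (differentiableOn_const _))
    apply DifferentiableOn.fun_sum
    intro k _
    exact (hωd.pow (k+1)).const_mul _
  have hGrep : ∀ K, ∀ z ∈ Metric.ball (0:ℂ) 1, HasSum (fun m => BK K m * z^m) (GK K z) := by
    intro K z hz
    have h1 : HasSum (fun m : ℕ => (if m = 0 then lam else 0) * z^m) lam := by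
      have := hasSum_single (f := fun m : ℕ => (if m = 0 then lam else 0) * z^m) 0
        (by intro m hm; simp [hm])
      simpa using this
    have h3 : ∀ k ∈ Finset.range K,
        HasSum (fun m => ((1 - A^2 : ℝ) : ℂ) * mu^k * (ck k m * z^m))
          (((1 - A^2 : ℝ) : ℂ) * mu^k * (ω z)^(k+1)) :=
      fun k _ => (hck k z hz).mul_left _
    have h4 := hasSum_sum h3
    have h2 : HasSum (fun m => (∑ k ∈ Finset.range K, ((1 - A^2 : ℝ) : ℂ) * mu^k * ck k m) * z^m)
        (∑ k ∈ Finset.range K, ((1 - A^2 : ℝ) : ℂ) * mu^k * (ω z)^(k+1)) := by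
      refine h4.congr_fun ?_
      intro m
      rw [Finset.sum_mul]
      exact Finset.sum_congr rfl fun k _ => by ring
    have h5 := ((ha z hz).sub h1).sub h2
    refine h5.congr_fun ?_
    intro m
    rw [hBKdef]
    dsimp only
    ring
  have hGbound : ∀ K, ∀ z ∈ Metric.ball (0:ℂ) 1,
      ‖GK K z‖ ≤ (1 - A^2) * A^K / (1 - A) := by
    intro K z hz
    have hgs := hgeom z hz
    have hterm_norm : ∀ k, ‖((1 - A^2 : ℝ) : ℂ) * mu^k * (ω z)^(k+1)‖ ≤ (1 - A^2) * A^k := by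
      intro k
      rw [norm_mul, norm_mul, norm_pow, norm_pow, hmu, Complex.norm_real,
        Real.norm_of_nonneg hc0.le]
      calc (1 - A^2) * A^k * ‖ω z‖^(k+1) ≤ (1 - A^2) * A^k * 1 := by
            apply mul_le_mul_of_nonneg_left (pow_le_one₀ (norm_nonneg _) (hωb z hz))
              (by positivity)
        _ = (1 - A^2) * A^k := mul_one _
    have hsumm : Summable fun k => ‖((1 - A^2 : ℝ) : ℂ) * mu^k * (ω z)^(k+1)‖ :=
      Summable.of_nonneg_of_le (fun _ => norm_nonneg _) hterm_norm
        ((summable_geometric_of_lt_one hA0 hAlt).mul_left _)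
    have htsum := Summable.sum_add_tsum_nat_add (f := fun k => ((1 - A^2 : ℝ) : ℂ) * mu^k * (ω z)^(k+1))
      K hgs.summable
    rw [hgs.tsum_eq] at htsum
    have hGK_eq : GK K z = ∑' k, ((1 - A^2 : ℝ) : ℂ) * mu^(k+K) * (ω z)^((k+K)+1) := by
      rw [hGKdef]
      dsimp only
      rw [← htsum]
      ring
    rw [hGK_eq]
    have hshift_summ : Summable fun k => ‖((1 - A^2 : ℝ) : ℂ) * mu^(k+K) * (ω z)^((k+K)+1)‖ :=
      (_root_.summable_nat_add_iff K).2 hsumm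
    calc ‖∑' k, ((1 - A^2 : ℝ) : ℂ) * mu^(k+K) * (ω z)^((k+K)+1)‖
        ≤ ∑' k, ‖((1 - A^2 : ℝ) : ℂ) * mu^(k+K) * (ω z)^((k+K)+1)‖ :=
          norm_tsum_le_tsum_norm hshift_summ
      _ ≤ ∑' k : ℕ, (1 - A^2) * A^K * A^k := by
          apply Summable.tsum_le_tsum _ hshift_summ
            (((summable_geometric_of_lt_one hA0 hAlt).mul_left _))
          intro k
          calc ‖((1 - A^2 : ℝ) : ℂ) * mu^(k+K) * (ω z)^((k+K)+1)‖ ≤ (1 - A^2) * A^(k+K) :=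
                hterm_norm (k+K)
            _ = (1 - A^2) * A^K * A^k := by rw [pow_add]; ring
      _ = (1 - A^2) * A^K * ∑' k : ℕ, A^k := tsum_mul_left
      _ = (1 - A^2) * A^K / (1 - A) := by
          rw [tsum_geometric_of_lt_one hA0 hAlt, div_eq_mul_inv]
  have hconv : ∀ m : ℕ,
      Tendsto (fun K => ∑ k ∈ Finset.range K, ((1 - A^2 : ℝ) : ℂ) * mu^k * ck k m) atTop
        (nhds (a m - (if m = 0 then lam else 0))) := by
    intro m
    have hbnd : ∀ K, ‖BK K m‖ * (1/2 : ℝ)^m ≤ (1 - A^2) * A^K / (1 - A) := fun K =>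
      coeff_mul_pow_le (hGd K) (hGbound K) (hGrep K) (by norm_num) (by norm_num) m
    have h0 : Tendsto (fun K => ((1 - A^2)/(1 - A) * (2:ℝ)^m) * A^K) atTop (nhds 0) := by
      have := tendsto_pow_atTop_nhds_zero_of_lt_one hA0 hAlt
      have h2 := this.const_mul ((1 - A^2)/(1 - A) * (2:ℝ)^m)
      simpa using h2
    have h1 : Tendsto (fun K => BK K m) atTop (nhds 0) := by
      apply squeeze_zero_norm (fun K => ?_) h0
      have h2 := hbnd K
      calc ‖BK K m‖ = (‖BK K m‖ * (1/2 : ℝ)^m) * (2:ℝ)^m := by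
            rw [mul_assoc, ← mul_pow]
            norm_num
        _ ≤ ((1 - A^2) * A^K / (1 - A)) * (2:ℝ)^m :=
            mul_le_mul_of_nonneg_right h2 (by positivity)
        _ = ((1 - A^2)/(1 - A) * (2:ℝ)^m) * A^K := by ring
    have h2 : Tendsto (fun K => (a m - (if m = 0 then lam else 0)) - BK K m) atTop
        (nhds ((a m - (if m = 0 then lam else 0)) - 0)) := tendsto_const_nhds.sub h1
    rw [sub_zero] at h2
    have h3 : (fun K => ∑ k ∈ Finset.range K, ((1 - A^2 : ℝ) : ℂ) * mu^k * ck k m)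
        = fun K => (a m - (if m = 0 then lam else 0)) - BK K m := by
      funext K
      rw [hBKdef]
      dsimp only
      ring
    rw [h3]
    exact h2
  have hram : ∀ m : ℕ, m ≠ 0 → ‖a m‖ ≤ ∑' k : ℕ, (1 - A^2) * A^k * ‖ck k m‖ := by
    intro m hm
    have h1 := hconv m
    simp only [if_neg hm, sub_zero] at h1
    have h2 := h1.norm
    apply le_of_tendsto h2
    filter_upwards with K
    have hsummK : Summable fun k : ℕ => (1 - A^2) * A^k * ‖ck k m‖ := by
      apply Summable.of_nonneg_of_le (fun k => by positivity) (fun k => ?_)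
        ((summable_geometric_of_lt_one hA0 hAlt).mul_left (1 - A^2))
      calc (1 - A^2) * A^k * ‖ck k m‖ ≤ (1 - A^2) * A^k * 1 :=
            mul_le_mul_of_nonneg_left (hck_norm k m) (by positivity)
        _ = (1 - A^2) * A^k := mul_one _
    calc ‖∑ k ∈ Finset.range K, ((1 - A^2 : ℝ) : ℂ) * mu^k * ck k m‖
        ≤ ∑ k ∈ Finset.range K, ‖((1 - A^2 : ℝ) : ℂ) * mu^k * ck k m‖ := norm_sum_le _ _
      _ = ∑ k ∈ Finset.range K, (1 - A^2) * A^k * ‖ck k m‖ := by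
          apply Finset.sum_congr rfl
          intro k _
          rw [norm_mul, norm_mul, norm_pow, hmu, Complex.norm_real, Real.norm_of_nonneg hc0.le]
      _ ≤ ∑' k : ℕ, (1 - A^2) * A^k * ‖ck k m‖ :=
          Summable.sum_le_tsum _ (fun k _ => by positivity) hsummK
  -- conclusion
  have hAr1 : A * r < 1 := by nlinarith
  have hsum2 : Summable fun m => ‖a (m+1)‖ * r^(m+1) := by
    apply Summable.of_nonneg_of_le (fun m => by positivity) (fun m => ?_)
      ((summable_geometric_of_lt_one hr0 hr1).mul_left r)
    calc ‖a (m+1)‖ * r^(m+1) ≤ 1 * r^(m+1) := by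
          apply mul_le_mul_of_nonneg_right (coeff_le hd hb ha (m+1)) (by positivity)
      _ = r * r^m := by rw [one_mul, pow_succ]; ring
  apply Summable.tsum_le_of_sum_le hsum2
  intro s
  have hterm2 : ∀ k : ℕ, ∑ m ∈ s, (1 - A^2) * A^k * ‖ck k (m+1)‖ * r^(m+1)
      ≤ (1 - A^2) * A^k * r^(k+1) := by
    intro k
    have hs1 : Summable fun m => ‖ck k (m+1)‖ * r^(m+1) :=
      (_root_.summable_nat_add_iff 1).2 (hck_sum k)
    have hshift : ∑ m ∈ s, ‖ck k (m+1)‖ * r^(m+1) ≤ r^(k+1) := by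
      calc ∑ m ∈ s, ‖ck k (m+1)‖ * r^(m+1) ≤ ∑' m, ‖ck k (m+1)‖ * r^(m+1) :=
            Summable.sum_le_tsum s (fun m _ => by positivity) hs1
        _ ≤ ∑' m, ‖ck k m‖ * r^m := by
            rw [Summable.tsum_eq_zero_add (hck_sum k)]
            have h1 : (0:ℝ) ≤ ‖ck k 0‖ * r^0 := by positivity
            linarith
        _ ≤ r^(k+1) := hck_tsum k
    calc ∑ m ∈ s, (1 - A^2) * A^k * ‖ck k (m+1)‖ * r^(m+1)
        = (1 - A^2) * A^k * ∑ m ∈ s, ‖ck k (m+1)‖ * r^(m+1) := by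
          rw [Finset.mul_sum]
          exact Finset.sum_congr rfl fun m _ => by ring
      _ ≤ (1 - A^2) * A^k * r^(k+1) :=
          mul_le_mul_of_nonneg_left hshift (by positivity)
  have hsumR2 : Summable fun k : ℕ => (1 - A^2) * A^k * r^(k+1) := by
    apply Summable.of_nonneg_of_le (fun k => by positivity) (fun k => ?_)
      (((summable_geometric_of_lt_one hA0 hAlt).mul_left ((1 - A^2) * r)))
    calc (1 - A^2) * A^k * r^(k+1) ≤ (1 - A^2) * A^k * r := by
          apply mul_le_mul_of_nonneg_left _ (by positivity)
          calc r^(k+1) = r^k * r := by rw [pow_succ]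
            _ ≤ 1 * r := mul_le_mul_of_nonneg_right (pow_le_one₀ hr0 hr1.le) hr0
            _ = r := one_mul _
      _ = (1 - A^2) * r * A^k := by ring
  have hsumL2 : Summable fun k : ℕ => ∑ m ∈ s, (1 - A^2) * A^k * ‖ck k (m+1)‖ * r^(m+1) :=
    Summable.of_nonneg_of_le
      (fun k => Finset.sum_nonneg fun m _ => by positivity) hterm2 hsumR2
  calc ∑ m ∈ s, ‖a (m+1)‖ * r^(m+1)
      ≤ ∑ m ∈ s, (∑' k : ℕ, (1 - A^2) * A^k * ‖ck k (m+1)‖) * r^(m+1) :=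
        Finset.sum_le_sum fun m _ =>
          mul_le_mul_of_nonneg_right (hram (m+1) (Nat.succ_ne_zero m)) (by positivity)
    _ = ∑ m ∈ s, ∑' k : ℕ, (1 - A^2) * A^k * ‖ck k (m+1)‖ * r^(m+1) :=
        Finset.sum_congr rfl fun m _ => (_root_.tsum_mul_right).symm
    _ = ∑' k : ℕ, ∑ m ∈ s, (1 - A^2) * A^k * ‖ck k (m+1)‖ * r^(m+1) := by
        refine (Summable.tsum_finsetSum ?_).symm
        intro m _
        apply Summable.of_nonneg_of_le (fun k => by positivity) (fun k => ?_)
          (((summable_geometric_of_lt_one hA0 hAlt).mul_left ((1 - A^2) * r^(m+1))))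
        calc (1 - A^2) * A^k * ‖ck k (m+1)‖ * r^(m+1)
            ≤ (1 - A^2) * A^k * 1 * r^(m+1) := by
              apply mul_le_mul_of_nonneg_right _ (by positivity)
              exact mul_le_mul_of_nonneg_left (hck_norm k (m+1)) (by positivity)
          _ = (1 - A^2) * r^(m+1) * A^k := by ring
    _ ≤ ∑' k : ℕ, (1 - A^2) * A^k * r^(k+1) := Summable.tsum_le_tsum hterm2 hsumL2 hsumR2
    _ = ∑' k : ℕ, ((1 - A^2) * r) * (A*r)^k :=
        tsum_congr fun k => by rw [mul_pow, pow_succ]; ring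
    _ = ((1 - A^2) * r) * ∑' k : ℕ, (A*r)^k := tsum_mul_left
    _ = (1 - A^2) * r / (1 - A * r) := by
        rw [tsum_geometric_of_lt_one (by positivity) hAr1, div_eq_mul_inv]

end BohrKP

open Metric

/-- `S_r(f) = π Σ_{n≥1} n |aₙ|² r^{2n}`, written in terms of the Taylor coefficients
`a : ℕ → ℂ` of `f` (the `n = 0` term vanishes, so we may sum over all of `ℕ`). -/
noncomputable def Sarea (a : ℕ → ℂ) (r : ℝ) : ℝ :=
  Real.pi * ∑' n : ℕ, (n : ℝ) * ‖a n‖ ^ 2 * r ^ (2 * n)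

/-- Kayumov–Ponnusamy: for `f` holomorphic and bounded by one on the unit disc with
Taylor coefficients `aₙ`, one has `Σ ‖aₙ‖ rⁿ + (16/9) · S_r/(π − S_r) ≤ 1` for all
`0 ≤ r ≤ 1/3`. -/
theorem bohr_inequality_with_area_term (f : ℂ → ℂ)
    (hd : DifferentiableOn ℂ f (ball (0 : ℂ) 1))
    (hb : ∀ z ∈ ball (0 : ℂ) 1, ‖f z‖ ≤ 1)
    (a : ℕ → ℂ)
    (ha : ∀ z ∈ ball (0 : ℂ) 1, HasSum (fun n : ℕ => a n * z ^ n) (f z))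
    (r : ℝ) (hr0 : 0 ≤ r) (hr : r ≤ 1 / 3) :
    (∑' n : ℕ, ‖a n‖ * r ^ n) + 16 / 9 * (Sarea a r / (Real.pi - Sarea a r)) ≤ 1 := by
  have hr1 : r < 1 := by linarith
  have hA0 : (0:ℝ) ≤ ‖a 0‖ := norm_nonneg _
  have hA1 : ‖a 0‖ ≤ 1 := BohrKP.coeff_le hd hb ha 0
  have hble : ∀ m, ‖a m‖ ≤ 1 := BohrKP.coeff_le hd hb ha
  have hcoef : ∀ m : ℕ, m ≠ 0 → ‖a m‖ ≤ 1 - ‖a 0‖^2 :=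
    fun m hm => BohrKP.coeff_sq_bound hd hb ha hm
  have hc0 : (0:ℝ) ≤ 1 - ‖a 0‖^2 := by nlinarith
  have hsum : Summable fun n => ‖a n‖ * r^n := BohrKP.summable_aux hble hr0 hr1
  -- area term estimates
  have hT2le : ∑' n : ℕ, (n:ℝ) * ‖a n‖^2 * r^(2*n) ≤ (1 - ‖a 0‖^2)^2 * (9/64) :=
    BohrKP.T2_bound hc0 hcoef hr0 hr
  have hT20 : (0:ℝ) ≤ ∑' n : ℕ, (n:ℝ) * ‖a n‖^2 * r^(2*n) :=
    tsum_nonneg fun n => by positivity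
  have hB0 : (1 - ‖a 0‖^2)^2 * (9/64) ≤ 9/64 := by nlinarith
  have hT2lt1 : ∑' n : ℕ, (n:ℝ) * ‖a n‖^2 * r^(2*n) < 1 :=
    lt_of_le_of_lt (le_trans hT2le hB0) (by norm_num)
  have hπ : (0:ℝ) < Real.pi := Real.pi_pos
  have hSarea : Sarea a r = Real.pi * ∑' n : ℕ, (n:ℝ) * ‖a n‖^2 * r^(2*n) := rfl
  have hfrac : Sarea a r / (Real.pi - Sarea a r)
      = (∑' n : ℕ, (n:ℝ) * ‖a n‖^2 * r^(2*n)) / (1 - ∑' n : ℕ, (n:ℝ) * ‖a n‖^2 * r^(2*n)) := by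
    rw [hSarea,
      show Real.pi - Real.pi * ∑' n : ℕ, (n:ℝ) * ‖a n‖^2 * r^(2*n)
        = Real.pi * (1 - ∑' n : ℕ, (n:ℝ) * ‖a n‖^2 * r^(2*n)) by ring,
      mul_div_mul_left _ _ hπ.ne']
  have hfrac_le : (∑' n : ℕ, (n:ℝ) * ‖a n‖^2 * r^(2*n))
        / (1 - ∑' n : ℕ, (n:ℝ) * ‖a n‖^2 * r^(2*n))
      ≤ ((1 - ‖a 0‖^2)^2 * (9/64)) / (1 - (1 - ‖a 0‖^2)^2 * (9/64)) := by
    have d1 : (0:ℝ) < 1 - ∑' n : ℕ, (n:ℝ) * ‖a n‖^2 * r^(2*n) := by linarith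
    have d2 : (0:ℝ) < 1 - (1 - ‖a 0‖^2)^2 * (9/64) := by nlinarith
    rw [div_le_div_iff₀ d1 d2]
    nlinarith [hT2le, hT20]
  rw [Summable.tsum_eq_zero_add hsum, hfrac]
  rw [show ‖a 0‖ * r^0 = ‖a 0‖ by norm_num]
  -- tail estimate
  rcases lt_or_eq_of_le hA1 with hAlt | hAeq
  · -- main case ‖a 0‖ < 1
    have htail := BohrKP.tail_bound hd hb ha hr0 hr hAlt
    have htail2 : ∑' m : ℕ, ‖a (m+1)‖ * r^(m+1) ≤ (1 - ‖a 0‖^2) / (3 - ‖a 0‖) := by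
      refine le_trans htail ?_
      rw [div_eq_mul_inv, mul_assoc, ← div_eq_mul_inv (r) _]
      calc (1 - ‖a 0‖^2) * (r / (1 - ‖a 0‖ * r))
          ≤ (1 - ‖a 0‖^2) * (1 / (3 - ‖a 0‖)) :=
            mul_le_mul_of_nonneg_left (BohrKP.r_ratio hr0 hr hA0 hA1) hc0
        _ = (1 - ‖a 0‖^2) / (3 - ‖a 0‖) := by rw [mul_one_div]
    have hfinal := BohrKP.final_poly hA0 hA1
    have h169 : 16/9 * ((∑' n : ℕ, (n:ℝ) * ‖a n‖^2 * r^(2*n))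
          / (1 - ∑' n : ℕ, (n:ℝ) * ‖a n‖^2 * r^(2*n)))
        ≤ 16/9 * (((1 - ‖a 0‖^2)^2 * (9/64)) / (1 - (1 - ‖a 0‖^2)^2 * (9/64))) :=
      mul_le_mul_of_nonneg_left hfrac_le (by norm_num)
    linarith
  · -- case ‖a 0‖ = 1 : all higher coefficients vanish
    have hzero : ∀ m : ℕ, m ≠ 0 → a m = 0 := by
      intro m hm
      have h1 := hcoef m hm
      rw [hAeq] at h1
      norm_num at h1
      exact h1
    have htaileq : ∑' m : ℕ, ‖a (m+1)‖ * r^(m+1) = 0 := by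
      have : ∀ m : ℕ, ‖a (m+1)‖ * r^(m+1) = 0 := by
        intro m
        rw [hzero (m+1) (Nat.succ_ne_zero m), norm_zero, zero_mul]
      rw [tsum_congr this, tsum_zero]
    have hT2eq : ∑' n : ℕ, (n:ℝ) * ‖a n‖^2 * r^(2*n) = 0 := by
      have : ∀ n : ℕ, (n:ℝ) * ‖a n‖^2 * r^(2*n) = 0 := by
        intro n
        rcases Nat.eq_zero_or_pos n with rfl | hpos
        · simp
        · rw [hzero n hpos.ne', norm_zero]
          ring
      rw [tsum_congr this, tsum_zero]
    rw [htaileq, hT2eq, ← hAeq]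
    norm_num
end
end

section
/- For each fixed 0 ≤ r ≤ 1/3, the function J_r(a) := 1 − a − r√(1−a²)/√(1−r²) is strictly decreasing on [0,r], and J(a,r) ≥ J(r,r) = 1 − 2r > 0 for all a ∈ [0,r]. -/
/-- `J(a,r) = 1 − a − r√(1−a²)/√(1−r²)`. -/
noncomputable def J (a r : ℝ) : ℝ :=
  1 - a - r * Real.sqrt (1 - a ^ 2) / Real.sqrt (1 - r ^ 2)

set_option maxHeartbeats 1000000 in
lemma J_key {a b r : ℝ} (ha0 : 0 ≤ a) (hab : a < b) (hbr : b ≤ r)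
    (hr0 : 0 ≤ r) (hr : r ≤ 1 / 3) : J b r < J a r := by
  have har : a ≤ r := le_of_lt (lt_of_lt_of_le hab hbr)
  have hb0 : 0 ≤ b := le_of_lt (lt_of_le_of_lt ha0 hab)
  set s := Real.sqrt (1 - a ^ 2) with hs
  set t := Real.sqrt (1 - b ^ 2) with ht
  set u := Real.sqrt (1 - r ^ 2) with hu
  have hs2 : s ^ 2 = 1 - a ^ 2 := Real.sq_sqrt (by nlinarith)
  have ht2 : t ^ 2 = 1 - b ^ 2 := Real.sq_sqrt (by nlinarith)
  have hu2 : u ^ 2 = 1 - r ^ 2 := Real.sq_sqrt (by nlinarith)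
  have hsp : 0 ≤ s := Real.sqrt_nonneg _
  have htp : 0 ≤ t := Real.sqrt_nonneg _
  have hup : 0 < u := Real.sqrt_pos.mpr (by nlinarith)
  have hslb : (8:ℝ)/9 ≤ s ^ 2 := by nlinarith
  have htlb : (8:ℝ)/9 ≤ t ^ 2 := by nlinarith
  have hulb : (8:ℝ)/9 ≤ u ^ 2 := by nlinarith
  have key : r * s / u < r * t / u + (b - a) := by
    rw [div_add' _ _ _ (ne_of_gt hup), div_lt_div_iff₀ hup hup]
    have hs9 : (9:ℝ)/10 ≤ s := by nlinarith [sq_nonneg (s - 9/10)]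
    have ht9 : (9:ℝ)/10 ≤ t := by nlinarith [sq_nonneg (t - 9/10)]
    have hu9 : (9:ℝ)/10 ≤ u := by nlinarith [sq_nonneg (u - 9/10)]
    have h1 : r * (s - t) * (s + t) = r * (b - a) * (a + b) := by
      linear_combination r * hs2 - r * ht2
    have hfac : 0 < u * (s + t) - r * (a + b) := by nlinarith
    have h2 : 0 < (b - a) * (u * (s + t) - r * (a + b)) :=
      mul_pos (by linarith) hfac
    nlinarith [h1, h2]
  simp only [J]
  linarith

/-- For each fixed `0 ≤ r ≤ 1/3`, the function `a ↦ J(a,r)` is strictly decreasing on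
`[0,r]`, and `J(a,r) ≥ J(r,r) = 1 − 2r > 0` for all `a ∈ [0,r]`. -/
theorem J_strictAntiOn_and_pos (r : ℝ) (hr0 : 0 ≤ r) (hr : r ≤ 1 / 3) :
    StrictAntiOn (fun a => J a r) (Set.Icc 0 r) ∧
    (∀ a ∈ Set.Icc 0 r, J r r ≤ J a r) ∧
    J r r = 1 - 2 * r ∧
    0 < 1 - 2 * r := by
  have hJrr : J r r = 1 - 2 * r := by
    have hup : 0 < Real.sqrt (1 - r ^ 2) := Real.sqrt_pos.mpr (by nlinarith)
    simp only [J]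
    field_simp
    ring
  refine ⟨?_, ?_, hJrr, by linarith⟩
  · intro a ha b hb hab
    exact J_key ha.1 hab hb.2 hr0 hr
  · intro a ha
    rcases eq_or_lt_of_le ha.2 with h | h
    · rw [h]
    · exact le_of_lt (J_key ha.1 h le_rfl hr0 hr)
end
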